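/- arXiv:2406.18188 — 12 statements merged into one kernel-verified Lean document; each statement's English description precedes it below -/
import Mathlib

section
/- Let N ≥ 4 be even. If 4 divides N, then M₄(N/2,N/2,N/2,N/2) = Id over ℤ/Nℤ, and 4 is the least positive n such that M_n(N/2,...,N/2) = ±Id. If 4 does not divide N, then M₆(N/2,...,N/2) = -Id over ℤ/Nℤ, and 6 is the least positive n such that M_n(N/2,...,N/2) = ±Id. -/
def matE {N : ℕ} (a : ZMod N) : Matrix (Fin 2) (Fin 2) (ZMod N) := !![a, -1; 1, 0]

def isMonSol {N : ℕ} (k : ZMod N) (m : ℕ) : Prop :=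
  matE k ^ m = 1 ∨ matE k ^ m = -1

def minMonSize {N : ℕ} (k : ZMod N) (r : ℕ) : Prop :=
  0 < r ∧ isMonSol k r ∧ ∀ m, 0 < m → isMonSol k m → r ≤ m

lemma off_ne {N : ℕ} (A : Matrix (Fin 2) (Fin 2) (ZMod N))
    (h : A 0 1 ≠ 0) : A ≠ 1 ∧ A ≠ -1 := by
  constructor <;> intro hA <;> apply h <;> rw [hA] <;> simp [Matrix.one_apply]

lemma off_ne' {N : ℕ} (A : Matrix (Fin 2) (Fin 2) (ZMod N))
    (h : A 1 0 ≠ 0) : A ≠ 1 ∧ A ≠ -1 := by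
  constructor <;> intro hA <;> apply h <;> rw [hA] <;> simp [Matrix.one_apply]

theorem stmt1 (N : ℕ) (hN : 4 ≤ N) (hE : Even N) :
    (4 ∣ N → matE ((N / 2 : ℕ) : ZMod N) ^ 4 = 1 ∧
      minMonSize ((N / 2 : ℕ) : ZMod N) 4) ∧
    (¬ 4 ∣ N → matE ((N / 2 : ℕ) : ZMod N) ^ 6 = -1 ∧
      minMonSize ((N / 2 : ℕ) : ZMod N) 6) := by
  haveI : NeZero N := ⟨by omega⟩
  haveI : Fact (1 < N) := ⟨by omega⟩
  obtain ⟨c, hc⟩ := hE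
  set k : ZMod N := ((N / 2 : ℕ) : ZMod N) with hk
  have h2 : k + k = 0 := by
    rw [hk, ← Nat.cast_add]
    have h : N / 2 + N / 2 = N := by omega
    rw [h, ZMod.natCast_self]
  have hone : (1 : ZMod N) ≠ 0 := one_ne_zero
  have hk0 : k ≠ 0 := by
    rw [hk, Ne, ZMod.natCast_eq_zero_iff]
    intro h; have := Nat.le_of_dvd (by omega) h; omega
  have e1 : matE k ^ 1 = !![k, -1; 1, 0] := by rw [pow_one, matE]
  constructor
  · -- 4 ∣ N
    intro h4
    obtain ⟨m, hm⟩ := h4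
    have hs : k * k = 0 := by
      rw [hk, ← Nat.cast_mul]
      have h1 : N / 2 = 2 * m := by omega
      have h : N / 2 * (N / 2) = N * m := by rw [h1, hm]; ring
      rw [h, Nat.cast_mul, ZMod.natCast_self, zero_mul]
    have e2 : matE k ^ 2 = !![-1, -k; k, -1] := by
      rw [pow_two, matE, Matrix.mul_fin_two]
      ext i j; fin_cases i <;> fin_cases j <;> simp
      · linear_combination hs
    have e3 : matE k ^ 3 = !![0, 1; -1, -k] := by
      rw [pow_succ, e2, matE, Matrix.mul_fin_two]
      ext i j; fin_cases i <;> fin_cases j <;> simp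
      · linear_combination -h2
      · linear_combination hs
    have e4 : matE k ^ 4 = 1 := by
      rw [pow_succ, e3, matE, Matrix.mul_fin_two]
      ext i j; fin_cases i <;> fin_cases j <;> simp [Matrix.one_apply]
      · linear_combination -h2
    refine ⟨e4, by norm_num, Or.inl e4, ?_⟩
    intro m' hm0 hsol
    by_contra hlt
    push_neg at hlt
    interval_cases m'
    · rcases hsol with h | h
      · exact (off_ne' _ (by rw [e1]; simpa using hone)).1 h
      · exact (off_ne' _ (by rw [e1]; simpa using hone)).2 h
    · rcases hsol with h | h
      · exact (off_ne' _ (by rw [e2]; simpa using hk0)).1 h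
      · exact (off_ne' _ (by rw [e2]; simpa using hk0)).2 h
    · rcases hsol with h | h
      · exact (off_ne _ (by rw [e3]; simpa using hone)).1 h
      · exact (off_ne _ (by rw [e3]; simpa using hone)).2 h
  · -- ¬ 4 ∣ N
    intro h4
    have hcodd : c % 2 = 1 := by omega
    have hc2 : N / 2 = c := by omega
    have hs : k * k = k := by
      rw [hk, hc2, ← Nat.cast_mul]
      obtain ⟨j, hj⟩ : ∃ j, c = 2 * j + 1 := ⟨c / 2, by omega⟩
      have h : c * c = c + N * j := by rw [hc, hj]; ring
      rw [h, Nat.cast_add, Nat.cast_mul, ZMod.natCast_self, zero_mul, add_zero]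
    have hk1 : k + 1 ≠ 0 := by
      rw [hk, Ne]
      intro h
      have h' : ((N / 2 + 1 : ℕ) : ZMod N) = 0 := by push_cast; exact h
      rw [ZMod.natCast_eq_zero_iff] at h'
      have := Nat.le_of_dvd (by omega) h'; omega
    have e2 : matE k ^ 2 = !![k - 1, k; k, -1] := by
      rw [pow_two, matE, Matrix.mul_fin_two]
      ext i j; fin_cases i <;> fin_cases j <;> simp
      · linear_combination hs
      · linear_combination -h2
    have e3 : matE k ^ 3 = !![k, 1 + k; k - 1, k] := by
      rw [pow_succ, e2, matE, Matrix.mul_fin_two]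
      ext i j; fin_cases i <;> fin_cases j <;> simp
      · linear_combination hs
      · linear_combination -h2
      · linear_combination hs
      · linear_combination -h2
    have e4 : matE k ^ 4 = !![1, k; k, 1 + k] := by
      rw [pow_succ, e3, matE, Matrix.mul_fin_two]
      ext i j; fin_cases i <;> fin_cases j <;> simp
      · linear_combination hs + h2
      · linear_combination -h2
      · linear_combination hs
      · linear_combination -h2
    have e5 : matE k ^ 5 = !![0, -1; 1, k] := by
      rw [pow_succ, e4, matE, Matrix.mul_fin_two]
      ext i j; fin_cases i <;> fin_cases j <;> simp
      · linear_combination h2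
      · linear_combination hs + h2
      · linear_combination -h2
    have e6 : matE k ^ 6 = -1 := by
      rw [pow_succ, e5, matE, Matrix.mul_fin_two]
      ext i j; fin_cases i <;> fin_cases j <;> simp [Matrix.one_apply]
      · linear_combination h2
    refine ⟨e6, by norm_num, Or.inr e6, ?_⟩
    intro m' hm0 hsol
    by_contra hlt
    push_neg at hlt
    interval_cases m'
    · rcases hsol with h | h
      · exact (off_ne' _ (by rw [e1]; simpa using hone)).1 h
      · exact (off_ne' _ (by rw [e1]; simpa using hone)).2 h
    · rcases hsol with h | h
      · exact (off_ne _ (by rw [e2]; simpa using hk0)).1 h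
      · exact (off_ne _ (by rw [e2]; simpa using hk0)).2 h
    · rcases hsol with h | h
      · exact (off_ne _ (by rw [e3]; simpa [add_comm] using hk1)).1 h
      · exact (off_ne _ (by rw [e3]; simpa [add_comm] using hk1)).2 h
    · rcases hsol with h | h
      · exact (off_ne _ (by rw [e4]; simpa using hk0)).1 h
      · exact (off_ne _ (by rw [e4]; simpa using hk0)).2 h
    · rcases hsol with h | h
      · exact (off_ne' _ (by rw [e5]; simpa using hone)).1 h
      · exact (off_ne' _ (by rw [e5]; simpa using hone)).2 h
end

section
/- Let p be a prime, k an integer, and n ≥ 1. Let r be the size of the k̄-monomial minimal solution modulo p^n. Then the size of the k̄-monomial minimal solution modulo p^{n+1} is equal to r or to p·r. -/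
lemma pm_mul {R : Type*} [Ring R] {x y : R} (hx : x = 1 ∨ x = -1) (hy : y = 1 ∨ y = -1) :
    x * y = 1 ∨ x * y = -1 := by
  rcases hx with h | h <;> rcases hy with h' | h' <;> subst h <;> subst h' <;> simp

lemma pm_pow {R : Type*} [Ring R] {x : R} (hx : x = 1 ∨ x = -1) (q : ℕ) :
    x ^ q = 1 ∨ x ^ q = -1 := by
  induction q with
  | zero => left; simp
  | succ q ih => rw [pow_succ]; exact pm_mul ih hx

lemma pm_sq {R : Type*} [Ring R] {x : R} (hx : x = 1 ∨ x = -1) : x * x = 1 := by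
  rcases hx with h | h <;> subst h <;> simp

lemma min_dvd {N : ℕ} {k : ZMod N} {r m : ℕ} (hr : minMonSize k r) (hm : 0 < m)
    (hsol : isMonSol k m) : r ∣ m := by
  obtain ⟨hr0, hsolr, hmin⟩ := hr
  set A := matE k with hA
  have h1 : A ^ (r * (m / r)) = 1 ∨ A ^ (r * (m / r)) = -1 := by
    rw [pow_mul]; exact pm_pow hsolr _
  have h2 : A ^ (r * (m / r)) * A ^ (m % r) = A ^ m := by
    rw [← pow_add, Nat.div_add_mod]
  have key : A ^ (m % r) = A ^ (r * (m / r)) * A ^ m := by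
    calc A ^ (m % r) = (A ^ (r * (m / r)) * A ^ (r * (m / r))) * A ^ (m % r) := by
          rw [pm_sq h1, one_mul]
      _ = A ^ (r * (m / r)) * A ^ m := by rw [mul_assoc, h2]
  have hs : isMonSol k (m % r) := by
    show A ^ (m % r) = 1 ∨ A ^ (m % r) = -1
    rw [key]; exact pm_mul h1 hsol
  rcases Nat.eq_zero_or_pos (m % r) with h0 | h0
  · exact Nat.dvd_of_mod_eq_zero h0
  · exact absurd (hmin _ h0 hs) (Nat.not_le.2 (Nat.mod_lt _ hr0))

lemma sol_reduce (p n : ℕ) (k : ℤ) {m : ℕ}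
    (h : isMonSol (k : ZMod (p ^ (n + 1))) m) : isMonSol (k : ZMod (p ^ n)) m := by
  have hd : p ^ n ∣ p ^ (n + 1) := pow_dvd_pow p (Nat.le_succ n)
  let f : ZMod (p ^ (n + 1)) →+* ZMod (p ^ n) := ZMod.castHom hd _
  have hmap : f.mapMatrix (matE (k : ZMod (p ^ (n + 1)))) = matE (k : ZMod (p ^ n)) := by
    ext i j
    fin_cases i <;> fin_cases j <;>
      simp [matE, RingHom.mapMatrix_apply, Matrix.map_apply]
  rcases h with h | h
  · left
    have := congrArg f.mapMatrix h
    rwa [map_pow, map_one, hmap] at this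
  · right
    have := congrArg f.mapMatrix h
    rwa [map_pow, map_neg, map_one, hmap] at this

lemma key_mul (p n : ℕ) [NeZero (p ^ (n + 1))] (hn : 1 ≤ n) {x y : ZMod (p ^ (n + 1))}
    (hx : p ^ n ∣ x.val) (hy : p ^ n ∣ y.val) : x * y = 0 := by
  have : (p : ℕ) ^ (n + 1) ∣ x.val * y.val := by
    refine dvd_trans ?_ (mul_dvd_mul hx hy)
    rw [← pow_add]
    exact pow_dvd_pow p (by omega)
  calc x * y = ((x.val * y.val : ℕ) : ZMod (p ^ (n + 1))) := by
        rw [Nat.cast_mul, ZMod.natCast_zmod_val, ZMod.natCast_zmod_val]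
  _ = 0 := (ZMod.natCast_eq_zero_iff _ _).2 this

lemma key_p (p n : ℕ) [NeZero (p ^ (n + 1))] {x : ZMod (p ^ (n + 1))}
    (hx : p ^ n ∣ x.val) : (p : ZMod (p ^ (n + 1))) * x = 0 := by
  have : (p : ℕ) ^ (n + 1) ∣ p * x.val := by
    simpa [pow_succ'] using mul_dvd_mul_left p hx
  calc (p : ZMod (p ^ (n + 1))) * x = ((p * x.val : ℕ) : ZMod (p ^ (n + 1))) := by
        rw [Nat.cast_mul, ZMod.natCast_zmod_val]
  _ = 0 := (ZMod.natCast_eq_zero_iff _ _).2 this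

lemma pow_expand {R : Type*} [Ring R] {E C : R} (hcomm : C * E = E * C) (hCC : C * C = 0)
    (m : ℕ) : (E + C) ^ (m + 1) = E ^ (m + 1) + (m + 1) • (E ^ m * C) := by
  induction m with
  | zero => simp
  | succ m ih =>
    have hCE : ∀ j : ℕ, E ^ j * C * E = E ^ (j + 1) * C := by
      intro j
      rw [mul_assoc, hcomm, ← mul_assoc, ← pow_succ]
    rw [pow_succ (E + C), ih, add_mul, smul_mul_assoc, mul_add, mul_add, hCE m,
      mul_assoc (E ^ m) C C, hCC, mul_zero, add_zero, ← pow_succ]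
    rw [succ_nsmul (E ^ (m + 1) * C) (m + 1), add_assoc,
      add_comm (E ^ (m + 1) * C) ((m + 1) • (E ^ (m + 1) * C))]

lemma sol_lift (p : ℕ) (hp : p.Prime) (n : ℕ) (hn : 1 ≤ n) (k : ℤ) {r : ℕ}
    (h : isMonSol (k : ZMod (p ^ n)) r) : isMonSol (k : ZMod (p ^ (n + 1))) (p * r) := by
  have hne : NeZero (p ^ (n + 1)) := ⟨pow_ne_zero _ hp.ne_zero⟩
  have hd : p ^ n ∣ p ^ (n + 1) := pow_dvd_pow p (Nat.le_succ n)
  let f : ZMod (p ^ (n + 1)) →+* ZMod (p ^ n) := ZMod.castHom hd _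
  have hmap : f.mapMatrix (matE (k : ZMod (p ^ (n + 1)))) = matE (k : ZMod (p ^ n)) := by
    ext i j
    fin_cases i <;> fin_cases j <;>
      simp [matE, RingHom.mapMatrix_apply, Matrix.map_apply]
  set A := matE (k : ZMod (p ^ (n + 1))) with hA
  set B := A ^ r with hB
  have hmapB : f.mapMatrix B = matE (k : ZMod (p ^ n)) ^ r := by
    rw [hB, map_pow, hmap]
  have hE : ∃ E : Matrix (Fin 2) (Fin 2) (ZMod (p ^ (n + 1))),
      (E = 1 ∨ E = -1) ∧ f.mapMatrix (B - E) = 0 := by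
    rcases h with h | h
    · exact ⟨1, Or.inl rfl, by rw [map_sub, hmapB, h, map_one, sub_self]⟩
    · exact ⟨-1, Or.inr rfl, by rw [map_sub, hmapB, h, map_neg, map_one, sub_self]⟩
  obtain ⟨E, hEpm, hC0⟩ := hE
  set C := B - E with hC
  have hCent : ∀ i j, p ^ n ∣ (C i j).val := by
    intro i j
    have h0 : f (C i j) = 0 := by
      have := congrFun (congrFun hC0 i) j
      simpa [RingHom.mapMatrix_apply, Matrix.map_apply] using this
    have : ((C i j).val : ZMod (p ^ n)) = 0 := by
      rwa [ZMod.natCast_val, ← ZMod.castHom_apply (h := hd)]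
    exact (ZMod.natCast_eq_zero_iff _ _).1 this
  have hCC : C * C = 0 := by
    ext i j
    rw [Matrix.mul_apply]
    refine Finset.sum_eq_zero fun l _ => ?_
    exact key_mul p n hn (hCent i l) (hCent l j)
  have hcomm : C * E = E * C := by
    rcases hEpm with h | h <;> subst h <;> simp
  have hBp : B ^ p = E ^ p := by
    have hEB : B = E + C := by rw [hC]; abel
    obtain ⟨m, hm⟩ : ∃ m, p = m + 1 := ⟨p - 1, (Nat.succ_pred_eq_of_pos hp.pos).symm⟩
    have hexp := pow_expand hcomm hCC m
    rw [← hm] at hexp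
    have hz : p • (E ^ m * C) = 0 := by
      ext i j
      simp only [Matrix.zero_apply, Matrix.smul_apply, nsmul_eq_mul]
      rw [Matrix.mul_apply, Finset.mul_sum]
      refine Finset.sum_eq_zero fun l _ => ?_
      rw [← mul_assoc, mul_comm ((p : ZMod (p ^ (n + 1)))), mul_assoc,
        key_p p n (hCent l j), mul_zero]
    rw [hEB, hexp, hz, add_zero]
  have : A ^ (p * r) = E ^ p := by
    rw [mul_comm, pow_mul, ← hB, hBp]
  show A ^ (p * r) = 1 ∨ A ^ (p * r) = -1
  rw [this]
  exact pm_pow hEpm p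

theorem stmt3 (p : ℕ) (hp : p.Prime) (k : ℤ) (n : ℕ) (hn : 1 ≤ n)
    (r r' : ℕ) (hr : minMonSize (k : ZMod (p ^ n)) r)
    (hr' : minMonSize (k : ZMod (p ^ (n + 1))) r') :
    r' = r ∨ r' = p * r := by
  have h1 : r ∣ r' := min_dvd hr hr'.1 (sol_reduce p n k hr'.2.1)
  have h2 : r' ∣ p * r := min_dvd hr' (Nat.mul_pos hp.pos hr.1) (sol_lift p hp n hn k hr.2.1)
  obtain ⟨t, ht⟩ := h1
  subst ht
  have htp : t ∣ p := by
    have : r * t ∣ r * p := by rwa [mul_comm p r] at h2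
    exact (Nat.mul_dvd_mul_iff_left hr.1).1 this
  rcases (Nat.Prime.eq_one_or_self_of_dvd hp t htp) with h | h
  · left; rw [h, mul_one]
  · right; rw [h, mul_comm]
end

section
/- Let p be an odd prime, k an integer, and n ≥ 1. If the size r of the k̄-monomial minimal solution modulo p^n is even, then M_r(k̄,...,k̄) = -Id in SL₂(ℤ/p^nℤ). -/
lemma sqrt_four {R : Type*} [CommRing R] [IsLocalRing R] (h2 : IsUnit (2 : R))
    (t : R) (ht : t * t = 4) : t = 2 ∨ t = -2 := by
  have hprod : (t + 2) * (t - 2) = 0 := by linear_combination ht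
  have h4 : IsUnit ((t + 2) + -(t - 2)) := by
    have h : (t + 2) + -(t - 2) = 2 * 2 := by ring
    rw [h]; exact h2.mul h2
  rcases IsLocalRing.isUnit_or_isUnit_of_isUnit_add h4 with h | h
  · left
    obtain ⟨u, hu⟩ := h.exists_left_inv
    have : t - 2 = 0 := by
      calc t - 2 = u * ((t + 2) * (t - 2)) := by rw [← mul_assoc, hu, one_mul]
        _ = 0 := by rw [hprod, mul_zero]
    linear_combination this
  · right
    have h' : IsUnit (t - 2) := by
      obtain ⟨u, hu⟩ := h.exists_left_inv
      exact IsUnit.of_mul_eq_one (-u) (by linear_combination hu)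
    obtain ⟨u, hu⟩ := h'.exists_left_inv
    have : t + 2 = 0 := by
      calc t + 2 = u * ((t + 2) * (t - 2)) := by
            rw [mul_comm (t + 2) (t - 2), ← mul_assoc, hu, one_mul]
        _ = 0 := by rw [hprod, mul_zero]
    linear_combination this

lemma zmod_isLocalRing (p n : ℕ) (hp : p.Prime) (hn : 1 ≤ n) :
    IsLocalRing (ZMod (p ^ n)) := by
  haveI : NeZero (p ^ n) := ⟨pow_ne_zero n hp.pos.ne'⟩
  haveI : Nontrivial (ZMod (p ^ n)) := by
    haveI : Fact (1 < p ^ n) := ⟨Nat.one_lt_pow (by omega) hp.one_lt⟩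
    infer_instance
  have key : ∀ x : ZMod (p ^ n), ¬ IsUnit x → p ∣ x.val := by
    intro x hx
    by_contra hdvd
    apply hx
    have h1 : IsUnit ((x.val : ℕ) : ZMod (p ^ n)) :=
      (ZMod.isUnit_iff_coprime _ _).mpr
        (Nat.Coprime.pow_right n ((hp.coprime_iff_not_dvd.mpr hdvd).symm))
    rwa [ZMod.natCast_rightInverse x] at h1
  apply IsLocalRing.of_nonunits_add
  intro a b ha hb hab
  have hpa := key a ha
  have hpb := key b hb
  have hval : (a + b).val = (a.val + b.val) % (p ^ n) := ZMod.val_add a b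
  have hpn : p ∣ p ^ n := dvd_pow_self p (by omega)
  have : p ∣ (a + b).val := by
    rw [hval]
    exact (Nat.dvd_mod_iff hpn).mpr (Nat.dvd_add hpa hpb)
  have hco := (ZMod.isUnit_iff_coprime (a + b).val (p ^ n)).mp
    (by rwa [ZMod.natCast_rightInverse (a + b)])
  exact hp.coprime_iff_not_dvd.mp ((Nat.Coprime.coprime_dvd_right hpn hco).symm) this

lemma sq_eq_one_mat {R : Type*} [CommRing R] [IsLocalRing R] (h2 : IsUnit (2 : R))
    (A : Matrix (Fin 2) (Fin 2) R) (hdet : A.det = 1) (hsq : A * A = 1) :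
    A = 1 ∨ A = -1 := by
  obtain ⟨v, hv⟩ := h2.exists_left_inv
  have hA := Matrix.eta_fin_two A
  set a := A 0 0; set b := A 0 1; set c := A 1 0; set d := A 1 1
  rw [hA] at hdet hsq
  rw [Matrix.det_fin_two_of] at hdet
  rw [show (1 : Matrix (Fin 2) (Fin 2) R) = !![1,0;0,1] from Matrix.one_fin_two,
    Matrix.mul_fin_two] at hsq
  have e00 : a * a + b * c = 1 := by have := congrFun (congrFun hsq 0) 0; simpa using this
  have e01 : a * b + b * d = 0 := by have := congrFun (congrFun hsq 0) 1; simpa using this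
  have e10 : c * a + d * c = 0 := by have := congrFun (congrFun hsq 1) 0; simpa using this
  have e11 : c * b + d * d = 1 := by have := congrFun (congrFun hsq 1) 1; simpa using this
  have ht : (a + d) * (a + d) = 4 := by linear_combination e00 + e11 + 2 * hdet + c * e01 - b * e10
  have cancel : ∀ x y : R, 2 * x = y → x = v * y := by
    intro x y hxy
    calc x = v * (2 * x) := by rw [← mul_assoc, hv, one_mul]
      _ = v * y := by rw [hxy]
  rcases sqrt_four h2 _ ht with h | h
  · left
    have ha : a = 1 := by
      have h2a : 2 * a = 2 * 1 := by linear_combination e00 + hdet - a * h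
      have := cancel a (2 * 1) h2a
      rw [← mul_assoc, hv, one_mul] at this; exact this
    have hd : d = 1 := by
      have h2d : 2 * d = 2 * 1 := by linear_combination e11 + hdet - d * h
      have := cancel d (2 * 1) h2d
      rw [← mul_assoc, hv, one_mul] at this; exact this
    have hb : b = 0 := by
      have h2b : 2 * b = 0 := by linear_combination e01 - b * h
      have := cancel b 0 h2b; simpa using this
    have hc : c = 0 := by
      have h2c : 2 * c = 0 := by linear_combination e10 - c * h
      have := cancel c 0 h2c; simpa using this
    rw [hA, ha, hb, hc, hd]
    ext i j; fin_cases i <;> fin_cases j <;> simp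
  · right
    have ha : a = -1 := by
      have h2a : 2 * a = 2 * (-1) := by linear_combination -e00 - hdet + a * h
      have := cancel a (2 * (-1)) h2a
      rw [← mul_assoc, hv, one_mul] at this; exact this
    have hd : d = -1 := by
      have h2d : 2 * d = 2 * (-1) := by linear_combination -e11 - hdet + d * h
      have := cancel d (2 * (-1)) h2d
      rw [← mul_assoc, hv, one_mul] at this; exact this
    have hb : b = 0 := by
      have h2b : 2 * b = 0 := by linear_combination -e01 + b * h
      have := cancel b 0 h2b; simpa using this
    have hc : c = 0 := by
      have h2c : 2 * c = 0 := by linear_combination -e10 + c * h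
      have := cancel c 0 h2c; simpa using this
    rw [hA, ha, hb, hc, hd]
    ext i j; fin_cases i <;> fin_cases j <;> simp

theorem stmt4 (p : ℕ) (hp : p.Prime) (hodd : Odd p) (k : ℤ) (n : ℕ) (hn : 1 ≤ n)
    (r : ℕ) (hr : minMonSize (k : ZMod (p ^ n)) r) (hre : Even r) :
    matE (k : ZMod (p ^ n)) ^ r = -1 := by
  haveI : Fact p.Prime := ⟨hp⟩
  haveI : NeZero (p ^ n) := ⟨pow_ne_zero n hp.pos.ne'⟩
  obtain ⟨hr0, hsol, hmin⟩ := hr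
  rcases hsol with h1 | h1
  · exfalso
    obtain ⟨s, hs⟩ := hre
    have hs0 : 0 < s := by omega
    have hsq : (matE (k : ZMod (p ^ n)) ^ s) * (matE (k : ZMod (p ^ n)) ^ s) = 1 := by
      rw [← pow_add, ← hs]; exact h1
    have hdet : (matE (k : ZMod (p ^ n)) ^ s).det = 1 := by
      rw [Matrix.det_pow]
      have : (matE (k : ZMod (p ^ n))).det = 1 := by
        simp [matE, Matrix.det_fin_two_of]
      rw [this, one_pow]
    have h2 : IsUnit (2 : ZMod (p ^ n)) := by
      have : IsUnit ((2 : ℕ) : ZMod (p ^ n)) :=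
        (ZMod.isUnit_iff_coprime 2 (p ^ n)).mpr (Nat.coprime_two_left.mpr hodd.pow)
      simpa using this
    haveI := zmod_isLocalRing p n hp hn
    rcases sq_eq_one_mat h2 _ hdet hsq with h | h
    · have := hmin s hs0 (Or.inl h); omega
    · have := hmin s hs0 (Or.inr h); omega
  · exact h1
end

section
/- Let n ≥ 2 and let k be an integer with k̄ ≠ 0̄ in ℤ/2^nℤ. If the size r of the k̄-monomial minimal solution modulo 2^n is even, then M_r(k̄,...,k̄) = Id in SL₂(ℤ/2^nℤ). -/
/-- Integer trace sequence of powers of `matE k`. -/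
def Tr (k : ℤ) : ℕ → ℤ
  | 0 => 2
  | 1 => k
  | (m+2) => k * Tr k (m+1) - Tr k m

lemma Tr_zero (k : ℤ) : Tr k 0 = 2 := rfl
lemma Tr_one (k : ℤ) : Tr k 1 = k := rfl
lemma Tr_add_two (k : ℤ) (m : ℕ) : Tr k (m+2) = k * Tr k (m+1) - Tr k m := rfl

/-- mod 4 orbit lemma for odd `c`. -/
lemma zmod4_orbit (c : ZMod 4) (hc : c = 1 ∨ c = 3) (u : ℕ → ZMod 4)
    (h0 : u 0 = 2) (h1 : u 1 = c)
    (hrec : ∀ m, u (m+2) = c * u (m+1) - u m) :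
    ∀ m, u m ≠ 0 := by
  rcases hc with rfl | rfl
  · have key : ∀ m, (u m = 2 ∧ u (m+1) = 1) ∨ (u m = 1 ∧ u (m+1) = 3) ∨
        (u m = 3 ∧ u (m+1) = 2) ∨ (u m = 2 ∧ u (m+1) = 3) ∨
        (u m = 3 ∧ u (m+1) = 1) ∨ (u m = 1 ∧ u (m+1) = 2) := by
      intro m
      induction m with
      | zero => exact Or.inl ⟨h0, h1⟩
      | succ p ih =>
        have h := hrec p
        rcases ih with ⟨a, b⟩ | ⟨a, b⟩ | ⟨a, b⟩ | ⟨a, b⟩ | ⟨a, b⟩ | ⟨a, b⟩ <;>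
          rw [a, b] at h
        · exact Or.inr (Or.inl ⟨b, by rw [h]; decide⟩)
        · exact Or.inr (Or.inr (Or.inl ⟨b, by rw [h]; decide⟩))
        · exact Or.inr (Or.inr (Or.inr (Or.inl ⟨b, by rw [h]; decide⟩)))
        · exact Or.inr (Or.inr (Or.inr (Or.inr (Or.inl ⟨b, by rw [h]; decide⟩))))
        · exact Or.inr (Or.inr (Or.inr (Or.inr (Or.inr ⟨b, by rw [h]; decide⟩))))
        · exact Or.inl ⟨b, by rw [h]; decide⟩
    intro m
    rcases key m with ⟨a, _⟩ | ⟨a, _⟩ | ⟨a, _⟩ | ⟨a, _⟩ | ⟨a, _⟩ | ⟨a, _⟩ <;>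
      rw [a] <;> decide
  · have key : ∀ m, (u m = 2 ∧ u (m+1) = 3) ∨ (u m = 3 ∧ u (m+1) = 3) ∨
        (u m = 3 ∧ u (m+1) = 2) := by
      intro m
      induction m with
      | zero => exact Or.inl ⟨h0, h1⟩
      | succ p ih =>
        have h := hrec p
        rcases ih with ⟨a, b⟩ | ⟨a, b⟩ | ⟨a, b⟩ <;> rw [a, b] at h
        · exact Or.inr (Or.inl ⟨b, by rw [h]; decide⟩)
        · exact Or.inr (Or.inr ⟨b, by rw [h]; decide⟩)
        · exact Or.inl ⟨b, by rw [h]; decide⟩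
    intro m
    rcases key m with ⟨a, _⟩ | ⟨a, _⟩ | ⟨a, _⟩ <;> rw [a] <;> decide

/-- Main integer lemma: `2^n` never divides `Tr k m` for `m ≥ 1`. -/
lemma Tr_not_dvd (n : ℕ) (hn : 2 ≤ n) (k : ℤ) (hk : ¬ ((2:ℤ)^n ∣ k))
    (m : ℕ) (hm : 1 ≤ m) : ¬ ((2:ℤ)^n ∣ Tr k m) := by
  have h4 : (4:ℤ) ∣ (2:ℤ)^n := by
    calc (4:ℤ) = 2^2 := by norm_num
    _ ∣ 2^n := pow_dvd_pow 2 hn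
  rcases Int.even_or_odd k with hke | hko
  · -- k even
    have hk0 : k ≠ 0 := by rintro rfl; exact hk (dvd_zero _)
    obtain ⟨v, w, hw, hkvw⟩ : ∃ v w, Odd w ∧ k = 2^v * w := by
      obtain ⟨v, w, hw, hkn⟩ := Nat.exists_eq_two_pow_mul_odd
        (Int.natAbs_ne_zero.mpr hk0)
      rcases Int.natAbs_eq k with he | he
      · exact ⟨v, w, (Int.odd_coe_nat w).mpr hw, by rw [he, hkn]; push_cast; ring⟩
      · exact ⟨v, -w, ((Int.odd_coe_nat w).mpr hw).neg,
          by rw [he, hkn]; push_cast; ring⟩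
    have hv1 : 1 ≤ v := by
      by_contra h
      interval_cases v
      · simp at hkvw
        rw [hkvw] at hke
        exact (Int.not_even_iff_odd.mpr hw) hke
    have hvn : v < n := by
      by_contra h
      push_neg at h
      exact hk (hkvw ▸ Dvd.dvd.mul_right (pow_dvd_pow 2 h) w)
    have hsplit : (2:ℤ)^(2*v-1) = 2 * 2^(2*v-2) := by
      rw [show 2*v-1 = (2*v-2)+1 by omega, pow_succ]; ring
    have hsplit2 : (2:ℤ)^v * (2:ℤ)^v = 2 * (2:ℤ)^(2*v-1) := by
      rw [← pow_add, show v + v = (2*v-1)+1 by omega, pow_succ]; ring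
    have key : ∀ j, (∃ d, Odd d ∧ Tr k (2*j) = 2*d) ∧
        (∃ c, Odd c ∧ Tr k (2*j+1) = 2^v * c) := by
      intro j
      induction j with
      | zero => exact ⟨⟨1, odd_one, by norm_num [Tr_zero]⟩, ⟨w, hw, by rw [Tr_one, hkvw]⟩⟩
      | succ p ih =>
        obtain ⟨⟨d, hd, hTd⟩, ⟨c, hc, hTc⟩⟩ := ih
        obtain ⟨d', rfl⟩ := hd
        have hTnext : Tr k (2*(p+1)) = 2 * (2^(2*v-1) * w * c - (2*d'+1)) := by
          rw [show 2*(p+1) = (2*p)+2 by ring, Tr_add_two]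
          rw [hTc, hTd, hkvw]
          rw [show (2:ℤ)^v * w * (2^v * c) = ((2:ℤ)^v * (2:ℤ)^v) * (w * c) by ring,
            hsplit2]
          ring
        have hodd2 : Odd (2^(2*v-1) * w * c - (2*d'+1)) := by
          refine ⟨2^(2*v-2) * w * c - d' - 1, ?_⟩
          rw [hsplit]; ring
        refine ⟨⟨_, hodd2, hTnext⟩, ?_⟩
        refine ⟨2 * w * (2^(2*v-1) * w * c - (2*d'+1)) - c, ?_, ?_⟩
        · obtain ⟨c', rfl⟩ := hc
          exact ⟨w * (2^(2*v-1) * w * (2*c'+1) - (2*d'+1)) - c' - 1, by ring⟩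
        · rw [show 2*(p+1)+1 = (2*p+1)+2 by ring, Tr_add_two,
            show 2*p+1+1 = 2*(p+1) by ring]
          rw [hTnext, hTc, hkvw]
          ring
    rcases Nat.even_or_odd m with he | ho
    · obtain ⟨j, rfl⟩ := he
      obtain ⟨⟨d, hd, hTd⟩, _⟩ := key j
      intro hdvd
      rw [show j + j = 2*j by ring, hTd] at hdvd
      obtain ⟨e, he⟩ := dvd_trans h4 hdvd
      obtain ⟨d', rfl⟩ := hd
      omega
    · obtain ⟨j, rfl⟩ := ho
      obtain ⟨_, ⟨c, hc, hTc⟩⟩ := key j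
      intro hdvd
      rw [hTc] at hdvd
      have h2v1 : (2:ℤ)^v * 2 ∣ 2^v * c := by
        rw [← pow_succ]
        exact dvd_trans (pow_dvd_pow 2 (by omega)) hdvd
      have h2c : (2:ℤ) ∣ c :=
        (mul_dvd_mul_iff_left (a := (2:ℤ)^v) (by positivity)).mp h2v1
      obtain ⟨c', rfl⟩ := hc
      omega
  · -- k odd : work mod 4
    set u : ℕ → ZMod 4 := fun m => ((Tr k m : ℤ) : ZMod 4) with hu
    have hcodd : Odd ((k : ℤ) : ZMod 4) := by
      rcases hko with ⟨j, rfl⟩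
      exact ⟨(j : ZMod 4), by push_cast; ring⟩
    have hc : ((k : ℤ) : ZMod 4) = 1 ∨ ((k : ℤ) : ZMod 4) = 3 := by
      obtain ⟨j, hj⟩ := hcodd
      rw [hj]
      have h' : ∀ j : ZMod 4, 2 * j + 1 = 1 ∨ 2 * j + 1 = 3 := by decide
      exact h' j
    have hne := zmod4_orbit ((k:ℤ) : ZMod 4) hc u
      (by simp only [hu, Tr_zero]; decide) (by simp [hu, Tr_one])
      (by intro m'; simp only [hu, Tr_add_two]; push_cast; ring) m
    intro hdvd
    have h4T : (4:ℤ) ∣ Tr k m := dvd_trans h4 hdvd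
    have : u m = 0 := by
      simp only [hu]
      exact_mod_cast (ZMod.intCast_zmod_eq_zero_iff_dvd _ 4).mpr (by exact_mod_cast h4T)
    exact hne this

theorem stmt5 (n : ℕ) (hn : 2 ≤ n) (k : ℤ) (hk : (k : ZMod (2 ^ n)) ≠ 0)
    (r : ℕ) (hr : minMonSize (k : ZMod (2 ^ n)) r) (hre : Even r) :
    matE (k : ZMod (2 ^ n)) ^ r = 1 := by
  rcases hr.2.1 with h1 | hneg
  · exact h1
  exfalso
  set N := 2^n with hN
  set K : ZMod N := (k : ZMod N) with hK
  set E := matE K with hE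
  -- E * E = K • E - 1
  have hE2 : E * E = K • E - 1 := by
    ext i j
    fin_cases i <;> fin_cases j <;>
      simp [hE, matE, Matrix.mul_apply, Fin.sum_univ_two, Matrix.one_apply] <;> ring
  -- trace identification
  have trc : ∀ m, (E^m) 0 0 + (E^m) 1 1 = ((Tr k m : ℤ) : ZMod N) := by
    have step : ∀ m, E^(m+2) = K • E^(m+1) - E^m := by
      intro m
      have : E^(m+2) = E^m * (E * E) := by
        rw [pow_succ, pow_succ, mul_assoc]
      rw [this, hE2, mul_sub, mul_one, Matrix.mul_smul, ← pow_succ]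
    have key : ∀ m, ((E^m) 0 0 + (E^m) 1 1 = ((Tr k m : ℤ) : ZMod N)) ∧
        ((E^(m+1)) 0 0 + (E^(m+1)) 1 1 = ((Tr k (m+1) : ℤ) : ZMod N)) := by
      intro m
      induction m with
      | zero =>
        constructor
        · simp [Tr_zero]
          norm_num
        · simp [Tr_one, hE, matE, hK]
      | succ p ih =>
        refine ⟨ih.2, ?_⟩
        rw [show p + 1 + 1 = p + 2 from rfl, step p, Tr_add_two]
        push_cast
        simp only [Matrix.sub_apply, Matrix.smul_apply, smul_eq_mul]
        rw [← ih.1, ← ih.2]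
        ring
    exact fun m => (key m).1
  -- decompose r = s + s, A := E^s, A * A = -1
  obtain ⟨s, rfl⟩ := hre
  have hs1 : 1 ≤ s := by
    have := hr.1
    omega
  set A := E^s with hA
  have hAA : A * A = -1 := by
    rw [hA, ← pow_add]
    exact hneg
  -- entry equations
  have h00 : A 0 0 * A 0 0 + A 0 1 * A 1 0 = -1 := by
    have := congrFun (congrFun hAA 0) 0
    simpa [Matrix.mul_apply, Fin.sum_univ_two, Matrix.one_apply] using this
  have h01 : A 0 0 * A 0 1 + A 0 1 * A 1 1 = 0 := by
    have := congrFun (congrFun hAA 0) 1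
    simpa [Matrix.mul_apply, Fin.sum_univ_two, Matrix.one_apply] using this
  have hdetE : E.det = 1 := by
    simp [hE, matE, Matrix.det_fin_two_of]
  have hdetA : A 0 0 * A 1 1 - A 0 1 * A 1 0 = 1 := by
    have : A.det = 1 := by rw [hA, Matrix.det_pow, hdetE, one_pow]
    rw [Matrix.det_fin_two] at this
    exact this
  -- trace of A is zero
  have htr0 : A 0 0 + A 1 1 = 0 := by
    linear_combination (A 1 1) * h00 - (A 1 0) * h01 - (A 0 0) * hdetA
  -- contradiction with integer lemma
  have hdvdk : ¬ ((2:ℤ)^n ∣ k) := by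
    intro hd
    apply hk
    rw [show ((k : ZMod (2^n)) = 0) ↔ ((2^n : ℕ) : ℤ) ∣ k from
      ZMod.intCast_zmod_eq_zero_iff_dvd k (2^n)]
    exact_mod_cast hd
  have hcast : ((Tr k s : ℤ) : ZMod N) = 0 := by
    rw [← trc s, ← hA, htr0]
  have hdvdT : ((2^n : ℕ) : ℤ) ∣ Tr k s := (ZMod.intCast_zmod_eq_zero_iff_dvd _ _).mp hcast
  exact Tr_not_dvd n hn k hdvdk s hs1 (by exact_mod_cast hdvdT)
end

section
/- Let k be an integer and n ≥ 2. Let r be the size of the k̄-monomial minimal solution modulo 2^n. If r > 2^{n-1}, then r ∈ {2^n, 3·2^{n-2}}. In particular, r ≤ 2^n. -/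
lemma matE_map {N M : ℕ} (h : M ∣ N) (k : ZMod N) :
    (ZMod.castHom h (ZMod M)).mapMatrix (matE k) = matE (ZMod.castHom h (ZMod M) k) := by
  ext i j
  fin_cases i <;> fin_cases j <;>
    simp [matE, RingHom.mapMatrix_apply, Matrix.map_apply, -ZMod.castHom_apply,
      map_one, map_neg, map_zero]

lemma isMonSol_descend {N M : ℕ} (h : M ∣ N) {k : ℤ} {m : ℕ}
    (hs : isMonSol ((k : ZMod N)) m) : isMonSol (k : ZMod M) m := by
  have hmap : (ZMod.castHom h (ZMod M)).mapMatrix (matE (k : ZMod N) ^ m)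
      = matE (k : ZMod M) ^ m := by
    rw [map_pow, matE_map, map_intCast]
  rcases hs with h1 | h1
  · left; rw [← hmap, h1, map_one]
  · right; rw [← hmap, h1, map_neg, map_one]

lemma sq_helper {n : ℕ} (hn : 1 ≤ n) (B u : Matrix (Fin 2) (Fin 2) (ZMod (2 ^ (n + 1))))
    (hu : u = 1 ∨ u = -1)
    (hB : ∀ i j, ∃ c, (B - u) i j = 2 ^ n * c) : B * B = 1 := by
  obtain ⟨q, rfl⟩ : ∃ q, n = q + 1 := ⟨n - 1, by omega⟩
  set A := B - u with hA
  have hB' : B = u + A := by rw [hA]; abel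
  have hzero : (2 : ZMod (2 ^ (q + 1 + 1))) ^ (q + 1 + 1) = 0 := by
    have := ZMod.natCast_self (2 ^ (q + 1 + 1))
    push_cast at this
    exact this
  have hAA : A * A = 0 := by
    ext i j
    rw [Matrix.mul_apply, Fin.sum_univ_two]
    obtain ⟨c1, hc1⟩ := hB i 0
    obtain ⟨c2, hc2⟩ := hB 0 j
    obtain ⟨c3, hc3⟩ := hB i 1
    obtain ⟨c4, hc4⟩ := hB 1 j
    rw [Matrix.zero_apply, hc1, hc2, hc3, hc4]
    have e : (2 : ZMod (2 ^ (q + 1 + 1))) ^ (q+1) * c1 * (2 ^ (q+1) * c2)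
        + 2 ^ (q+1) * c3 * (2 ^ (q+1) * c4)
        = 2 ^ (q+1+1) * (2 ^ q * (c1 * c2 + c3 * c4)) := by ring
    rw [e, hzero, zero_mul]
  have hA2 : A + A = 0 := by
    ext i j
    obtain ⟨c, hc⟩ := hB i j
    rw [Matrix.add_apply, Matrix.zero_apply, hc]
    have e : (2 : ZMod (2 ^ (q + 1 + 1))) ^ (q+1) * c + 2 ^ (q+1) * c
        = 2 ^ (q+1+1) * c := by ring
    rw [e, hzero, zero_mul]
  rcases hu with rfl | rfl
  · have e : ((1 : Matrix (Fin 2) (Fin 2) (ZMod (2 ^ (q+1+1)))) + A) * (1 + A)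
        = 1 + (A + A) + A * A := by noncomm_ring
    rw [hB', e, hAA, hA2, add_zero, add_zero]
  · have e : ((-1 : Matrix (Fin 2) (Fin 2) (ZMod (2 ^ (q+1+1)))) + A) * (-1 + A)
        = 1 - (A + A) + A * A := by noncomm_ring
    rw [hB', e, hAA, hA2, sub_zero, add_zero]

lemma isMonSol_lift {k : ℤ} {n m : ℕ} (hn : 1 ≤ n)
    (hs : isMonSol (k : ZMod (2 ^ n)) m) : isMonSol (k : ZMod (2 ^ (n + 1))) (2 * m) := by
  left
  have hdvd : (2 : ℕ) ^ n ∣ 2 ^ (n + 1) := pow_dvd_pow 2 (Nat.le_succ n)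
  set φ := ZMod.castHom hdvd (ZMod (2 ^ n)) with hφ
  set B := matE (k : ZMod (2 ^ (n + 1))) ^ m with hBdef
  have hmap : φ.mapMatrix B = matE (k : ZMod (2 ^ n)) ^ m := by
    rw [hBdef, map_pow, matE_map, map_intCast]
  obtain ⟨u, hu, hBu⟩ : ∃ u, (u = 1 ∨ u = -1) ∧ φ.mapMatrix B = φ.mapMatrix u := by
    rcases hs with h | h
    · exact ⟨1, Or.inl rfl, by rw [hmap, h, map_one]⟩
    · exact ⟨-1, Or.inr rfl, by rw [hmap, h, map_neg, map_one]⟩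
  have hker : ∀ i j, ∃ c, (B - u) i j = 2 ^ n * c := by
    intro i j
    have h0 : φ ((B - u) i j) = 0 := by
      have h1 : φ.mapMatrix (B - u) = 0 := by rw [map_sub, hBu, sub_self]
      have h2 : φ ((B - u) i j) = (φ.mapMatrix (B - u)) i j := by
        simp [RingHom.mapMatrix_apply, Matrix.map_apply]
      rw [h2, h1, Matrix.zero_apply]
    set a := (B - u) i j with hadef
    have hcast : a = ((a.val : ℕ) : ZMod (2 ^ (n + 1))) := (ZMod.natCast_zmod_val a).symm
    rw [hcast, map_natCast, ZMod.natCast_eq_zero_iff] at h0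
    obtain ⟨c, hc⟩ := h0
    refine ⟨(c : ZMod (2 ^ (n + 1))), ?_⟩
    rw [hcast, hc]
    push_cast
    ring
  have hsq : B * B = 1 := sq_helper hn B u hu hker
  have hgoal : matE (k : ZMod (2 ^ (n + 1))) ^ (2 * m) = B * B := by
    rw [hBdef, ← pow_add, two_mul]
  rw [hgoal]
  exact hsq

lemma minMonSize_dvd {N : ℕ} {k : ZMod N} {r : ℕ} (hr : minMonSize k r)
    {m : ℕ} (hm : isMonSol k m) : r ∣ m := by
  obtain ⟨hr0, hrs, hmin⟩ := hr
  have h1 : matE k ^ m = (matE k ^ r) ^ (m / r) * matE k ^ (m % r) := by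
    rw [← pow_mul, ← pow_add, Nat.div_add_mod]
  have hpow : (matE k ^ r) ^ (m / r) = 1 ∨ (matE k ^ r) ^ (m / r) = -1 := by
    rcases hrs with h | h
    · left; rw [h, one_pow]
    · rw [h]
      rcases Nat.even_or_odd (m / r) with he | ho
      · left; exact he.neg_one_pow
      · right; exact ho.neg_one_pow
  have hs : isMonSol k (m % r) := by
    rcases hpow with hp | hp
    · rw [hp, one_mul] at h1
      rcases hm with h | h
      · left; rw [← h1, h]
      · right; rw [← h1, h]
    · rw [hp, neg_one_mul] at h1
      rcases hm with h | h
      · right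
        rw [h] at h1
        rw [← neg_eq_iff_eq_neg 
          ] at h1
        rw [← h1]
      · left
        rw [h] at h1
        have := congrArg Neg.neg h1
        rw [neg_neg, neg_neg] at this
        rw [← this]
  by_cases h0 : m % r = 0
  · exact Nat.dvd_of_mod_eq_zero h0
  · have := hmin (m % r) (by omega) hs
    have h2 := Nat.mod_lt m hr0
    omega

lemma monSolBase' : ∀ k : ZMod 4,
    ((matE k ^ 3 = 1 ∨ matE k ^ 3 = -1) ∨ (matE k ^ 4 = 1 ∨ matE k ^ 4 = -1)) := by
  decide

lemma monSolBase : ∀ k : ZMod (2 ^ 2), isMonSol k 3 ∨ isMonSol k 4 := fun k =>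
  monSolBase' k

lemma monSolMain : ∀ p : ℕ, ∀ k : ℤ, ∀ r : ℕ, minMonSize (k : ZMod (2 ^ (p + 2))) r →
    (2 ^ (p + 1) < r → r = 2 ^ (p + 2) ∨ r = 3 * 2 ^ p) ∧ r ≤ 2 ^ (p + 2) := by
  intro p
  induction p with
  | zero =>
    intro k r hr
    obtain ⟨hpos, hsol, hmin⟩ := hr
    have hle : r ≤ 4 := by
      rcases monSolBase (k : ZMod (2 ^ 2)) with h | h
      · exact le_trans (hmin 3 (by norm_num) h) (by norm_num)
      · exact hmin 4 (by norm_num) h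
    norm_num
    omega
  | succ p ih =>
    intro k r' hr'
    classical
    have hds : isMonSol (k : ZMod (2 ^ (p + 2))) r' :=
      isMonSol_descend (pow_dvd_pow 2 (by omega)) hr'.2.1
    have hex : ∃ m, 0 < m ∧ isMonSol (k : ZMod (2 ^ (p + 2))) m := ⟨r', hr'.1, hds⟩
    obtain ⟨r, hrmin⟩ : ∃ r, minMonSize (k : ZMod (2 ^ (p + 2))) r :=
      ⟨Nat.find hex, (Nat.find_spec hex).1, (Nat.find_spec hex).2,
        fun m hm hsm => Nat.find_min' hex ⟨hm, hsm⟩⟩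
    obtain ⟨hdich, hle⟩ := ih k r hrmin
    have hlift : isMonSol (k : ZMod (2 ^ (p + 2 + 1))) (2 * r) :=
      isMonSol_lift (by omega) hrmin.2.1
    have hdvd : r' ∣ 2 * r := minMonSize_dvd hr' hlift
    have hrpos : 0 < r := hrmin.1
    have eB : (2 : ℕ) ^ (p + 2) = 4 * 2 ^ p := by ring
    have eC : (2 : ℕ) ^ (p + 1 + 2) = 8 * 2 ^ p := by ring
    have eD : (2 : ℕ) ^ (p + 1 + 1) = 4 * 2 ^ p := by ring
    have eE : (2 : ℕ) ^ (p + 1) = 2 * 2 ^ p := by ring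
    have hr'pos : 0 < r' := hr'.1
    constructor
    · intro hbig
      have h2r : r' = 2 * r := by
        obtain ⟨t, ht⟩ := hdvd
        have ht1 : t = 1 := by
          by_contra hne
          have ht0 : t ≠ 0 := by
            rintro rfl
            simp at ht
            omega
          have h2t : 2 ≤ t := by omega
          have h1 : r' * 2 ≤ r' * t := Nat.mul_le_mul_left _ h2t
          rw [← ht] at h1
          omega
        rw [ht1, mul_one] at ht
        omega
      have hrbig : 2 ^ (p + 1) < r := by omega
      rcases hdich hrbig with h | h
      · left; rw [h2r, h]; ring
      · right; rw [h2r, h]; ring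
    · have h1 := Nat.le_of_dvd (by omega) hdvd
      omega

theorem stmt7 (k : ℤ) (n : ℕ) (hn : 2 ≤ n)
    (r : ℕ) (hr : minMonSize (k : ZMod (2 ^ n)) r) :
    (2 ^ (n - 1) < r → r = 2 ^ n ∨ r = 3 * 2 ^ (n - 2)) ∧ r ≤ 2 ^ n := by
  obtain ⟨p, rfl⟩ : ∃ p, n = p + 2 := ⟨n - 2, by omega⟩
  have e1 : p + 2 - 1 = p + 1 := by omega
  have e2 : p + 2 - 2 = p := by omega
  rw [e1, e2]
  exact monSolMain p k r hr
end

section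
/- Let N ≥ 2 not be of the form 2u with u odd (i.e., N is odd, or 4 divides N). Then the size of any k̄-monomial minimal solution modulo N is at most 2N. -/
open Matrix Polynomial

/-- the companion-type matrix over any commutative ring -/
def Emat (R : Type*) [CommRing R] (a : R) : Matrix (Fin 2) (Fin 2) R := !![a, -1; 1, 0]

lemma Emat_sq (R : Type*) [CommRing R] (a : R) :
    Emat R a * Emat R a = a • Emat R a - 1 := by
  ext i j
  fin_cases i <;> fin_cases j <;>
    simp [Emat, Matrix.mul_apply, Fin.sum_univ_two, Matrix.one_apply] <;> ring

lemma nilp_pow {R : Type*} [Ring R] (Y : R) (h : Y * Y = 0) (t : ℕ) :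
    (1 + Y) ^ t = 1 + t • Y := by
  induction t with
  | zero => simp
  | succ n ih =>
      rw [pow_succ, ih]
      have : (n • Y) * Y = n • (Y * Y) := by rw [smul_mul_assoc]
      rw [add_mul, one_mul, mul_add, mul_one, this, h, smul_zero, add_zero, succ_nsmul]
      abel

lemma Emat_aeval (F : Type*) [Field F] (a : F) :
    Polynomial.aeval (Emat F a) (X * X - C a * X + C 1) = 0 := by
  have h1 : (algebraMap F (Matrix (Fin 2) (Fin 2) F)) a = a • 1 := by
    rw [Algebra.algebraMap_eq_smul_one]
  simp only [map_add, map_sub, _root_.map_mul, aeval_X, aeval_C, _root_.map_one, h1]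
  rw [Emat_sq, smul_mul_assoc, one_mul]
  abel

lemma pow_of_two_roots {F : Type*} [Field F] (a lam mu : F)
    (hsum : lam + mu = a) (hprod : lam * mu = 1) (hne : lam ≠ mu)
    {M : ℕ} (hlam : lam ^ M = 1) (hmu : mu ^ M = 1) :
    Emat F a ^ M = 1 := by
  have hdl : (X - C lam) ∣ (X ^ M - C 1 : F[X]) := by
    rw [dvd_iff_isRoot]; simp [IsRoot, hlam]
  have hdm : (X - C mu) ∣ (X ^ M - C 1 : F[X]) := by
    rw [dvd_iff_isRoot]; simp [IsRoot, hmu]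
  have hcop : IsCoprime (X - C lam : F[X]) (X - C mu) := by
    refine ⟨-C (lam - mu)⁻¹, C (lam - mu)⁻¹, ?_⟩
    have hlm : lam - mu ≠ 0 := sub_ne_zero.mpr hne
    have h1 : C (lam - mu)⁻¹ * ((X - C mu) - (X - C lam)) = 1 := by
      have h0 : ((X : F[X]) - C mu) - (X - C lam) = C (lam - mu) := by
        rw [map_sub]; ring
      rw [h0, ← C_mul, inv_mul_cancel₀ hlm, C_1]
    rw [← h1]; ring
  obtain ⟨q, hq⟩ := (IsCoprime.mul_dvd hcop hdl hdm :
      (X - C lam) * (X - C mu) ∣ (X ^ M - C 1 : F[X]))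
  have hfac : (X - C lam) * (X - C mu) = (X * X - C a * X + C 1 : F[X]) := by
    rw [← hsum, ← hprod, C_add, C_mul]
    ring
  have h3 := congrArg (Polynomial.aeval (Emat F a)) hq
  rw [map_sub, map_pow, aeval_X, aeval_C, _root_.map_mul, hfac, Emat_aeval, zero_mul] at h3
  rw [_root_.map_one (algebraMap F (Matrix (Fin 2) (Fin 2) F))] at h3
  linear_combination (norm := abel) h3

lemma odd_prime_base (p : ℕ) [hfp : Fact p.Prime] (hp2 : p ≠ 2) (κ : ZMod p) :
    ∃ c, 0 < c ∧ c ≤ p ∧ Emat (ZMod p) κ ^ (2 * c) = 1 := by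
  have hpodd : p % 2 = 1 := (Nat.Prime.eq_two_or_odd hfp.out).resolve_left hp2
  have hp3 : 3 ≤ p := by
    have := hfp.out.two_le; omega
  by_cases hΔ0 : κ * κ - 4 = 0
  · -- ramified case : E^(2p) = 1
    refine ⟨p, by omega, le_refl p, ?_⟩
    set E := Emat (ZMod p) κ with hE
    have hE2 : E * E = !![κ * κ - 1, -κ; κ, -1] := by
      ext i j
      fin_cases i <;> fin_cases j <;>
        simp [hE, Emat, Matrix.mul_apply, Fin.sum_univ_two] <;> ring
    set Y : Matrix (Fin 2) (Fin 2) (ZMod p) := !![κ * κ - 2, -κ; κ, -2] with hY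
    have hEY : E * E = 1 + Y := by
      rw [hE2, hY]
      ext i j
      fin_cases i <;> fin_cases j <;> simp [Matrix.one_apply] <;> ring
    have hYY : Y * Y = 0 := by
      ext i j
      fin_cases i <;> fin_cases j <;>
        simp [hY, Matrix.mul_apply, Fin.sum_univ_two]
      · linear_combination (κ * κ - 1) * hΔ0
      · linear_combination (-κ) * hΔ0
      · linear_combination κ * hΔ0
      · linear_combination (-1 : ZMod p) * hΔ0
    have : E ^ (2 * p) = (E * E) ^ p := by rw [pow_mul, sq]
    rw [this, hEY, nilp_pow Y hYY p, ← Nat.cast_smul_eq_nsmul (ZMod p) p Y,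
      ZMod.natCast_self, zero_smul, add_zero]
  · -- Δ ≠ 0 : work in GF(p²)
    set Δ : ZMod p := κ * κ - 4 with hΔdef
    have hΔ : Δ ≠ 0 := hΔ0
    have hs1 : Δ ^ (p - 1) = 1 := ZMod.pow_card_sub_one_eq_one hΔ
    set s : ZMod p := Δ ^ ((p - 1) / 2) with hsdef
    have hss : s * s = 1 := by
      rw [hsdef, ← pow_add]
      have : (p - 1) / 2 + (p - 1) / 2 = p - 1 := by omega
      rw [this, hs1]
    have hs : s = 1 ∨ s = -1 := mul_self_eq_one_iff.mp hss
    classical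
    let K := GaloisField p 2
    letI : Fintype K := Fintype.ofFinite K
    set φ : ZMod p →+* K := (algebraMap (ZMod p) K : ZMod p →+* K) with hφ
    have hφinj : Function.Injective φ := φ.injective
    have hcard : Fintype.card K = p ^ 2 := by
      rw [← Nat.card_eq_fintype_card]
      exact GaloisField.card p 2 two_ne_zero
    have hrc : ringChar K ≠ 2 := by
      rw [ringChar.eq K p]; exact hp2
    have hΔK : φ Δ ≠ 0 := fun h => hΔ (hφinj (by simpa using h))
    -- φ Δ is a square in K
    have hdiv : p ^ 2 / 2 = (p - 1) / 2 * (p + 1) := by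
      have h1 : p ^ 2 = 2 * ((p - 1) / 2 * (p + 1)) + 1 := by
        obtain ⟨t, rfl⟩ : ∃ t, p = 2 * t + 1 := ⟨p / 2, by omega⟩
        have : (2 * t + 1 - 1) / 2 = t := by omega
        rw [this]; ring
      omega
    have hsq : IsSquare (φ Δ) := by
      rw [FiniteField.isSquare_iff hrc hΔK, hcard, hdiv, pow_mul, ← map_pow, ← hsdef]
      rcases hs with h | h
      · rw [h, _root_.map_one, one_pow]
      · rw [h, map_neg, _root_.map_one]
        exact Even.neg_one_pow (Odd.add_one (Nat.odd_iff.mpr hpodd))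
    obtain ⟨r, hr⟩ := hsq
    have hrne : r ≠ 0 := by
      intro h; rw [h, mul_zero] at hr; exact hΔK hr
    have h2K : (2 : K) ≠ 0 := by
      have h2p : (2 : ZMod p) ≠ 0 := by
        intro h
        have := (ZMod.natCast_eq_zero_iff 2 p).mp (by exact_mod_cast h)
        have := Nat.le_of_dvd (by norm_num) this
        omega
      have : φ 2 = (2 : K) := by rw [map_ofNat]
      rw [← this]
      exact fun h => h2p (hφinj (by simpa using h))
    set i2 : K := (2 : K)⁻¹ with hi2
    set lam : K := (φ κ + r) * i2 with hlam
    set mu : K := (φ κ - r) * i2 with hmu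
    have h2i : (2 : K) * i2 = 1 := mul_inv_cancel₀ h2K
    have hsum : lam + mu = φ κ := by
      rw [hlam, hmu]
      linear_combination (φ κ) * h2i
    have hk4 : φ κ * φ κ - φ Δ = 4 := by
      have h1 : κ * κ - Δ = 4 := by rw [hΔdef]; ring
      have h2 := congrArg φ h1
      rw [map_sub, _root_.map_mul] at h2
      rw [h2]
      exact map_ofNat φ 4
    have hprod : lam * mu = 1 := by
      rw [hlam, hmu]
      linear_combination (i2 * i2) * hk4 + (i2 * i2) * hr + (2 * i2 + 1) * h2i
    have hlm : lam - mu = r := by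
      rw [hlam, hmu]
      linear_combination r * h2i
    have hne : lam ≠ mu := by
      intro h; rw [h, sub_self] at hlm; exact hrne hlm.symm
    -- Frobenius computations
    have hpdec : p = 2 * ((p - 1) / 2) + 1 := by omega
    have hrp : r ^ p = φ s * r := by
      have h1 : (r * r) ^ ((p - 1) / 2) * r = r ^ p := by
        rw [← sq, ← pow_mul, ← pow_succ]
        exact congrArg (fun t => r ^ t) hpdec.symm
      rw [← h1, ← hr, ← map_pow, ← hsdef]
    have hkp : (φ κ) ^ p = φ κ := by rw [← map_pow, ZMod.pow_card]
    have h2p : (2 : K) ^ p = 2 := by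
      have h2 : φ 2 = (2 : K) := by rw [map_ofNat]
      rw [← h2, ← map_pow, ZMod.pow_card]
    have hip : i2 ^ p = i2 := by
      rw [hi2, inv_pow, h2p]
    have hlamp : lam ^ p = (φ κ + φ s * r) * i2 := by
      rw [hlam, mul_pow, add_pow_char, hkp, hrp, hip]
    have hmup : mu ^ p = (φ κ - φ s * r) * i2 := by
      have : (φ κ - r) ^ p = φ κ ^ p + (-r) ^ p := by
        rw [sub_eq_add_neg, add_pow_char]
      rw [hmu, mul_pow, this, Odd.neg_pow (Nat.odd_iff.mpr hpodd), hkp, hrp, hip,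
        ← sub_eq_add_neg]
    have hlam0 : lam ≠ 0 := left_ne_zero_of_mul_eq_one hprod
    have hmu0 : mu ≠ 0 := right_ne_zero_of_mul_eq_one hprod
    -- choose exponent
    have key : ∃ c, 0 < c ∧ c ≤ p ∧ lam ^ (2 * c) = 1 ∧ mu ^ (2 * c) = 1 := by
      rcases hs with h | h
      · -- s = 1 : lam^p = lam, order divides p - 1
        have hl : lam ^ p = lam := by rw [hlamp, h, _root_.map_one, one_mul, ← hlam]
        have hm : mu ^ p = mu := by rw [hmup, h, _root_.map_one, one_mul, ← hmu]
        refine ⟨(p - 1) / 2, by omega, by omega, ?_, ?_⟩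
        · have h2c : 2 * ((p - 1) / 2) = p - 1 := by omega
          rw [h2c]
          have : lam ^ (p - 1) * lam = lam := by
            rw [← pow_succ]
            have : p - 1 + 1 = p := by omega
            rw [this, hl]
          have := mul_right_cancel₀ hlam0 (this.trans (one_mul lam).symm)
          exact this
        · have h2c : 2 * ((p - 1) / 2) = p - 1 := by omega
          rw [h2c]
          have : mu ^ (p - 1) * mu = mu := by
            rw [← pow_succ]
            have : p - 1 + 1 = p := by omega
            rw [this, hm]
          exact mul_right_cancel₀ hmu0 (this.trans (one_mul mu).symm)
      · -- s = -1 : lam^p = mu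
        have hφs : φ s = -1 := by rw [h, map_neg, _root_.map_one]
        have hl : lam ^ p = mu := by
          rw [hlamp, hφs, hmu, neg_one_mul, ← sub_eq_add_neg]
        have hm : mu ^ p = lam := by
          rw [hmup, hφs, hlam, neg_one_mul, sub_neg_eq_add]
        refine ⟨(p + 1) / 2, by omega, by omega, ?_, ?_⟩
        · have h2c : 2 * ((p + 1) / 2) = p + 1 := by omega
          rw [h2c, pow_succ, hl, mul_comm mu lam]
          exact hprod
        · have h2c : 2 * ((p + 1) / 2) = p + 1 := by omega
          rw [h2c, pow_succ, hm]
          exact hprod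
    obtain ⟨c, hc0, hcp, hlM, hmM⟩ := key
    refine ⟨c, hc0, hcp, ?_⟩
    have hK : Emat K (φ κ) ^ (2 * c) = 1 :=
      pow_of_two_roots (φ κ) lam mu hsum hprod hne hlM hmM
    have hmap : (Emat (ZMod p) κ).map φ = Emat K (φ κ) := by
      ext i j
      fin_cases i <;> fin_cases j <;> simp [Emat]
    apply Matrix.map_injective hφinj
    show (Emat (ZMod p) κ ^ (2 * c)).map φ = (1 : Matrix (Fin 2) (Fin 2) (ZMod p)).map φ
    have hpow : (Emat (ZMod p) κ ^ (2 * c)).map φ = ((Emat (ZMod p) κ).map φ) ^ (2 * c) := by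
      exact map_pow (φ.mapMatrix) (Emat (ZMod p) κ) (2 * c)
    rw [hpow, hmap, hK]
    exact (Matrix.map_one _ (map_zero φ) (_root_.map_one φ)).symm

lemma four_base (κ : ZMod 4) :
    Emat (ZMod 4) κ ^ (2 * 2) = 1 ∨ Emat (ZMod 4) κ ^ (2 * 3) = 1 := by
  revert κ; decide

/-- reduction of an integer matrix mod `n` -/
def redM (n : ℕ) : Matrix (Fin 2) (Fin 2) ℤ →+* Matrix (Fin 2) (Fin 2) (ZMod n) :=
  (Int.castRingHom (ZMod n)).mapMatrix

lemma redM_apply (n : ℕ) (A : Matrix (Fin 2) (Fin 2) ℤ) (i j : Fin 2) :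
    redM n A i j = ((A i j : ℤ) : ZMod n) := rfl

lemma red_one_iff (n : ℕ) (A : Matrix (Fin 2) (Fin 2) ℤ) :
    redM n A = 1 ↔ ∀ i j, (n : ℤ) ∣ (A - 1) i j := by
  have h1 : redM n A = 1 ↔ redM n (A - 1) = 0 := by
    rw [map_sub, _root_.map_one, sub_eq_zero]
  rw [h1]
  constructor
  · intro h i j
    rw [← ZMod.intCast_zmod_eq_zero_iff_dvd, ← redM_apply, h]
    rfl
  · intro h
    ext i j
    rw [Matrix.zero_apply, redM_apply, ZMod.intCast_zmod_eq_zero_iff_dvd]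
    exact h i j

lemma red_pow_mul (n m t : ℕ) (A : Matrix (Fin 2) (Fin 2) ℤ)
    (h : redM n (A ^ m) = 1) : redM n (A ^ (m * t)) = 1 := by
  rw [pow_mul, map_pow, h, one_pow]

lemma red_crt (a b : ℕ) (hab : Nat.Coprime a b) (A : Matrix (Fin 2) (Fin 2) ℤ) (m : ℕ)
    (ha : redM a (A ^ m) = 1) (hb : redM b (A ^ m) = 1) : redM (a * b) (A ^ m) = 1 := by
  rw [red_one_iff] at ha hb ⊢
  intro i j
  have := (Nat.isCoprime_iff_coprime.mpr hab).mul_dvd (ha i j) (hb i j)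
  exact_mod_cast this

lemma lift_step (A : Matrix (Fin 2) (Fin 2) ℤ) (p j m : ℕ) (hj : 1 ≤ j)
    (h : redM (p ^ j) (A ^ m) = 1) : redM (p ^ (j + 1)) (A ^ (m * p)) = 1 := by
  set Z := redM (p ^ (j + 1)) (A ^ m) with hZ
  have hdvd : ∀ i l, ((p ^ j : ℕ) : ℤ) ∣ (A ^ m - 1) i l := (red_one_iff _ _).mp h
  have hex : ∀ i l : Fin 2, ∃ y : ZMod (p ^ (j + 1)),
      (Z - 1) i l = ((p ^ j : ℕ) : ZMod (p ^ (j + 1))) * y := by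
    intro i l
    obtain ⟨t, ht⟩ := hdvd i l
    refine ⟨(t : ℤ), ?_⟩
    have h2 : (Z - 1) i l = (((A ^ m - 1) i l : ℤ) : ZMod (p ^ (j + 1))) := by
      rw [hZ, ← _root_.map_one (redM (p ^ (j + 1))), ← map_sub, redM_apply]
    rw [h2, ht]
    push_cast
    ring
  choose X hX using hex
  set W : Matrix (Fin 2) (Fin 2) (ZMod (p ^ (j + 1))) := Matrix.of X with hW
  set cpj : ZMod (p ^ (j + 1)) := ((p ^ j : ℕ) : ZMod (p ^ (j + 1))) with hcpj
  have hY : Z - 1 = cpj • W := by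
    ext i l
    rw [Matrix.smul_apply, smul_eq_mul]
    exact hX i l
  have hZY : Z = 1 + cpj • W := by rw [← hY]; abel
  have hc2 : cpj * cpj = 0 := by
    rw [hcpj, ← Nat.cast_mul, ZMod.natCast_eq_zero_iff, ← pow_add]
    exact pow_dvd_pow p (by omega)
  have hYY : (cpj • W) * (cpj • W) = 0 := by
    rw [smul_mul_assoc, mul_smul_comm, smul_smul, hc2, zero_smul]
  have hfin : Z ^ p = 1 := by
    have hps : (p : ZMod (p ^ (j + 1))) * cpj = 0 := by
      rw [hcpj, ← Nat.cast_mul, ZMod.natCast_eq_zero_iff]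
      exact ⟨1, by ring⟩
    rw [hZY, nilp_pow _ hYY p, ← Nat.cast_smul_eq_nsmul (ZMod (p ^ (j + 1))) p,
      smul_smul, hps, zero_smul, add_zero]
  rw [pow_mul, map_pow, ← hZ, hfin]

lemma lift_iter (A : Matrix (Fin 2) (Fin 2) ℤ) (p j m : ℕ) (hj : 1 ≤ j)
    (h : redM (p ^ j) (A ^ m) = 1) :
    ∀ i, redM (p ^ (j + i)) (A ^ (m * p ^ i)) = 1 := by
  intro i
  induction i with
  | zero => simpa using h
  | succ t ih =>
      have h2 := lift_step A p (j + t) (m * p ^ t) (by omega) ih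
      have e1 : j + t + 1 = j + (t + 1) := by omega
      have e2 : m * p ^ t * p = m * p ^ (t + 1) := by rw [pow_succ]; ring
      rwa [e1, e2] at h2

lemma red_Emat (n : ℕ) (k₀ : ℤ) :
    redM n (Emat ℤ k₀) = Emat (ZMod n) ((k₀ : ZMod n)) := by
  ext i j
  fin_cases i <;> fin_cases j <;>
    simp [redM_apply, Emat]

lemma main_ind (k₀ : ℤ) :
    ∀ n : ℕ, (2 ∣ n → 4 ∣ n) → 0 < n →
      ∃ c, 0 < c ∧ c ≤ n ∧ redM n (Emat ℤ k₀ ^ (2 * c)) = 1 := by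
  intro n
  induction n using Nat.recOnPosPrimePosCoprime with
  | zero => intro _ h; omega
  | one =>
      intro _ _
      refine ⟨1, one_pos, le_refl 1, ?_⟩
      exact Subsingleton.elim _ _
  | prime_pow p e hp he =>
      intro hcond _
      have hpp : p.Prime := hp
      haveI : Fact p.Prime := ⟨hpp⟩
      by_cases hp2 : p = 2
      · -- p = 2, e ≥ 2
        subst hp2
        have he2 : 2 ≤ e := by
          have h2 : 2 ∣ 2 ^ e := dvd_pow_self 2 (by omega)
          have h4 : (2 : ℕ) ^ 2 ∣ 2 ^ e := by
            have := hcond h2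
            simpa [show (4 : ℕ) = 2 ^ 2 by norm_num] using this
          exact (Nat.pow_dvd_pow_iff_le_right one_lt_two).mp h4
        rcases four_base ((k₀ : ZMod 4)) with hb | hb <;>
        [ (refine ⟨2 * 2 ^ (e - 2), by positivity, ?_, ?_⟩); (refine ⟨3 * 2 ^ (e - 2), by positivity, ?_, ?_⟩)]
        · calc 2 * 2 ^ (e - 2) ≤ 2 ^ 2 * 2 ^ (e - 2) := by
                have : (2:ℕ) ≤ 2 ^ 2 := by norm_num
                exact Nat.mul_le_mul_right _ this
            _ = 2 ^ e := by rw [← pow_add]; congr 1; omega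
        · have hred4 : redM (2 ^ 2) (Emat ℤ k₀ ^ (2 * 2)) = 1 := by
            rw [show (2:ℕ)^2 = 4 by norm_num, map_pow, red_Emat]
            exact hb
          have := lift_iter (Emat ℤ k₀) 2 2 (2 * 2) (by norm_num) hred4 (e - 2)
          have e1 : 2 + (e - 2) = e := by omega
          have e2 : 2 * 2 * 2 ^ (e - 2) = 2 * (2 * 2 ^ (e - 2)) := by ring
          rwa [e1, e2] at this
        · calc 3 * 2 ^ (e - 2) ≤ 2 ^ 2 * 2 ^ (e - 2) := by
                have : (3:ℕ) ≤ 2 ^ 2 := by norm_num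
                exact Nat.mul_le_mul_right _ this
            _ = 2 ^ e := by rw [← pow_add]; congr 1; omega
        · have hred4 : redM (2 ^ 2) (Emat ℤ k₀ ^ (2 * 3)) = 1 := by
            rw [show (2:ℕ)^2 = 4 by norm_num, map_pow, red_Emat]
            exact hb
          have := lift_iter (Emat ℤ k₀) 2 2 (2 * 3) (by norm_num) hred4 (e - 2)
          have e1 : 2 + (e - 2) = e := by omega
          have e2 : 2 * 3 * 2 ^ (e - 2) = 2 * (3 * 2 ^ (e - 2)) := by ring
          rwa [e1, e2] at this
      · -- p odd
        obtain ⟨c₀, hc₀, hc₀p, hE⟩ := odd_prime_base p hp2 ((k₀ : ZMod p))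
        refine ⟨c₀ * p ^ (e - 1), Nat.mul_pos hc₀ (pow_pos hpp.pos _), ?_, ?_⟩
        · calc c₀ * p ^ (e - 1) ≤ p * p ^ (e - 1) := Nat.mul_le_mul_right _ hc₀p
            _ = p ^ e := by rw [← pow_succ']; congr 1; omega
        · have hred : redM (p ^ 1) (Emat ℤ k₀ ^ (2 * c₀)) = 1 := by
            rw [pow_one, map_pow, red_Emat]
            exact hE
          have := lift_iter (Emat ℤ k₀) p 1 (2 * c₀) (le_refl 1) hred (e - 1)
          have e1 : 1 + (e - 1) = e := by omega
          have e2 : 2 * c₀ * p ^ (e - 1) = 2 * (c₀ * p ^ (e - 1)) := by ring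
          rwa [e1, e2] at this
  | coprime a b ha hb hab iha ihb =>
      intro hcond _
      have hkey : ∀ x y : ℕ, 1 < x → 1 < y → Nat.Coprime x y → (2 ∣ x * y → 4 ∣ x * y) →
          (2 ∣ x → 4 ∣ x) := by
        intro x y hx hy hxy hc h2x
        have hyodd : ¬ 2 ∣ y := by
          intro h2y
          have := Nat.dvd_gcd h2x h2y
          rw [Nat.Coprime.gcd_eq_one hxy] at this
          omega
        have h4xy : 4 ∣ x * y := hc (h2x.mul_right y)
        have hcop4 : Nat.Coprime 4 y := by
          have h2y : Nat.Coprime 2 y := (Nat.prime_two.coprime_iff_not_dvd).mpr hyodd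
          simpa [show (4:ℕ) = 2 * 2 by norm_num] using Nat.Coprime.mul h2y h2y
        exact Nat.Coprime.dvd_of_dvd_mul_right hcop4 h4xy
      have hca := hkey a b ha hb hab hcond
      have hcb := hkey b a hb ha hab.symm (by rwa [mul_comm b a])
      obtain ⟨ca, hca0, hcaa, hredA⟩ := iha hca (by omega)
      obtain ⟨cb, hcb0, hcbb, hredB⟩ := ihb hcb (by omega)
      refine ⟨ca * cb, Nat.mul_pos hca0 hcb0, Nat.mul_le_mul hcaa hcbb, ?_⟩
      have hA : redM a (Emat ℤ k₀ ^ (2 * (ca * cb))) = 1 := by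
        have h := red_pow_mul a (2 * ca) cb _ hredA
        rwa [show 2 * ca * cb = 2 * (ca * cb) by ring] at h
      have hB : redM b (Emat ℤ k₀ ^ (2 * (ca * cb))) = 1 := by
        have h := red_pow_mul b (2 * cb) ca _ hredB
        rwa [show 2 * cb * ca = 2 * (ca * cb) by ring] at h
      exact red_crt a b hab _ _ hA hB

theorem stmt9 (N : ℕ) (hN : 2 ≤ N) (hform : ¬ ∃ u, Odd u ∧ N = 2 * u)
    (k : ZMod N) (l : ℕ) (hl : minMonSize k l) :
    l ≤ 2 * N := by
  haveI : NeZero N := ⟨by omega⟩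
  obtain ⟨k₀n, hk₀⟩ := ZMod.natCast_zmod_surjective (n := N) k
  set k₀ : ℤ := (k₀n : ℤ) with hk₀def
  have hcond : 2 ∣ N → 4 ∣ N := by
    intro h2
    by_contra h4
    obtain ⟨u, hu⟩ := h2
    refine hform ⟨u, ?_, hu⟩
    rw [Nat.odd_iff]
    omega
  obtain ⟨c, hc0, hcN, hred⟩ := main_ind k₀ N hcond (by omega)
  have hmat : matE k ^ (2 * c) = 1 := by
    have h1 : redM N (Emat ℤ k₀ ^ (2 * c)) = (Emat (ZMod N) ((k₀ : ZMod N))) ^ (2 * c) := by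
      rw [map_pow, red_Emat]
    have h2 : ((k₀ : ZMod N)) = k := by
      rw [hk₀def, Int.cast_natCast, hk₀]
    have h3 : Emat (ZMod N) k = matE k := rfl
    rw [h1, h2, h3] at hred
    exact hred
  have hsol : isMonSol k (2 * c) := Or.inl hmat
  have := hl.2.2 (2 * c) (by omega) hsol
  omega
end

section
/- Let N = p₁^{α₁}···p_r^{α_r} with r ≥ 1, with p_i pairwise distinct primes and α_i ≥ 1, and let k = a·p₁^{β₁}···p_r^{β_r} with 1 ≤ β_i ≤ α_i for all i and a an integer divisible by none of the p_i. Then the size of the k̄-monomial minimal solution modulo N equals 2·p₁^{α₁-β₁}···p_r^{α_r-β_r}. -/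
open Finset Nat

lemma sum_half_bound : ∀ n : ℕ, ∀ b : ℕ, (∑ t ∈ Finset.range b, n / 2^(t+1)) ≤ n - 1 := by
  intro n
  induction n using Nat.strong_induction_on with
  | _ n ih =>
    intro b
    cases b with
    | zero => simp
    | succ b =>
      rw [Finset.sum_range_succ']
      by_cases hn : n ≤ 1
      · have h1 : ∀ t, n / 2^(t+1) = 0 := by
          intro t
          apply Nat.div_eq_of_lt
          calc n ≤ 1 := hn
          _ < 2^(t+1) := Nat.one_lt_two_pow (by omega)
        simp [h1]; omega
      · have key : ∀ t, n / 2^(t+1+1) = (n/2) / 2^(t+1) := by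
          intro t
          rw [Nat.div_div_eq_div_mul]
          ring_nf
        simp only [key]
        have ih2 := ih (n/2) (by omega) b
        have h2 : n / 2^(0+1) = n / 2 := by norm_num
        rw [h2]
        omega

lemma sum_third_bound : ∀ n : ℕ, ∀ b : ℕ, (∑ t ∈ Finset.range b, n / 3^(t+1)) ≤ n / 2 := by
  intro n
  induction n using Nat.strong_induction_on with
  | _ n ih =>
    intro b
    cases b with
    | zero => simp
    | succ b =>
      rw [Finset.sum_range_succ']
      by_cases hn : n ≤ 2
      · have h1 : ∀ t, n / 3^(t+1) = 0 := by
          intro t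
          apply Nat.div_eq_of_lt
          have : 3 ≤ 3^(t+1) := Nat.le_self_pow (by omega) 3
          omega
        simp [h1]; omega
      · have key : ∀ t, n / 3^(t+1+1) = (n/3) / 3^(t+1) := by
          intro t
          rw [Nat.div_div_eq_div_mul]
          ring_nf
        simp only [key]
        have ih2 := ih (n/3) (by omega) b
        have h2 : n / 3^(0+1) = n / 3 := by norm_num
        rw [h2]
        omega

lemma factorization_factorial_le (p : ℕ) (hp : p.Prime) (n : ℕ) :
    ((n)!).factorization p ≤ n - 1 := by
  rcases Nat.eq_zero_or_pos n with h0 | h0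
  · subst h0; simp
  have hdvd : p ^ ((n)!).factorization p ∣ (n)! := Nat.ordProj_dvd _ _
  have hlog : Nat.log p n < n + 1 := lt_succ_of_le (Nat.log_le_self p n)
  have hle := (Nat.Prime.pow_dvd_factorial_iff hp hlog).mp hdvd
  rw [Finset.sum_Ico_eq_sum_range] at hle
  have : (∑ t ∈ Finset.range (n + 1 - 1), n / p ^ (1 + t)) ≤ n - 1 := by
    calc (∑ t ∈ Finset.range (n + 1 - 1), n / p ^ (1 + t))
        ≤ ∑ t ∈ Finset.range (n + 1 - 1), n / 2 ^ (t+1) := by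
          apply Finset.sum_le_sum
          intro t _
          rw [add_comm 1 t]
          exact Nat.div_le_div_left (Nat.pow_le_pow_left hp.two_le _) (Nat.pow_pos (by omega))
      _ ≤ n - 1 := sum_half_bound n _
  omega

lemma factorization_factorial_le_half (p : ℕ) (hp : p.Prime) (hp3 : 3 ≤ p) (n : ℕ) :
    ((n)!).factorization p ≤ n / 2 := by
  have hdvd : p ^ ((n)!).factorization p ∣ (n)! := Nat.ordProj_dvd _ _
  have hlog : Nat.log p n < n + 1 := lt_succ_of_le (Nat.log_le_self p n)
  have hle := (Nat.Prime.pow_dvd_factorial_iff hp hlog).mp hdvd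
  rw [Finset.sum_Ico_eq_sum_range] at hle
  calc ((n)!).factorization p ≤ ∑ t ∈ Finset.range (n + 1 - 1), n / p ^ (1 + t) := hle
    _ ≤ ∑ t ∈ Finset.range (n + 1 - 1), n / 3 ^ (t+1) := by
        apply Finset.sum_le_sum
        intro t _
        rw [add_comm 1 t]
        exact Nat.div_le_div_left (Nat.pow_le_pow_left hp3 _) (Nat.pow_pos (by omega))
    _ ≤ n / 2 := sum_third_bound n _

lemma fact_split_odd (p : ℕ) (hp : p.Prime) (i : ℕ) (hi : 1 ≤ i) :
    ∃ c q : ℕ, (2*i+1)! = p^c * q ∧ ¬ p ∣ q ∧ c ≤ 2*i - 1 := by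
  refine ⟨((2*i+1)!).factorization p, (2*i+1)! / p ^ (((2*i+1)!).factorization p),
    (Nat.ordProj_mul_ordCompl_eq_self _ _).symm,
    Nat.not_dvd_ordCompl hp (Nat.factorial_ne_zero _), ?_⟩
  by_cases h2 : p = 2
  · subst h2
    have hmul : (2*i+1)! = (2*i+1) * (2*i)! := Nat.factorial_succ (2*i)
    have hfac : ((2*i+1)!).factorization 2
        = (2*i+1).factorization 2 + ((2*i)!).factorization 2 := by
      rw [hmul, Nat.factorization_mul (by omega) (Nat.factorial_ne_zero _)]
      simp
    have hodd : (2*i+1).factorization 2 = 0 :=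
      Nat.factorization_eq_zero_of_not_dvd (by omega)
    have := factorization_factorial_le 2 hp (2*i)
    omega
  · have hp3 : 3 ≤ p := by
      have := hp.two_le
      omega
    have := factorization_factorial_le_half p hp hp3 (2*i+1)
    omega

lemma fact_split_even (p : ℕ) (hp : p.Prime) (i : ℕ) :
    ∃ c q : ℕ, (2*i+2)! = p^c * q ∧ ¬ p ∣ q ∧ c ≤ 2*i + 1 := by
  refine ⟨((2*i+2)!).factorization p, (2*i+2)! / p ^ (((2*i+2)!).factorization p),
    (Nat.ordProj_mul_ordCompl_eq_self _ _).symm,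
    Nat.not_dvd_ordCompl hp (Nat.factorial_ne_zero _), ?_⟩
  have := factorization_factorial_le p hp (2*i+2)
  omega

def Fterm (k : ℤ) (j i : ℕ) : ℤ := (-1)^i * ((j+i).choose (2*i+1) : ℤ) * k^(2*i)

def Sq (k : ℤ) (j : ℕ) : ℤ := ∑ i ∈ Finset.range j, Fterm k j i

lemma Fterm_eq_zero {k : ℤ} {j i : ℕ} (h : j ≤ i) : Fterm k j i = 0 := by
  unfold Fterm
  rw [Nat.choose_eq_zero_of_lt (by omega)]
  simp

lemma Sq_ext (k : ℤ) {j M : ℕ} (h : j ≤ M) :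
    Sq k j = ∑ i ∈ Finset.range M, Fterm k j i := by
  unfold Sq
  apply Finset.sum_subset (Finset.range_subset_range.mpr h)
  intro i _ hi
  exact Fterm_eq_zero (by simp only [Finset.mem_range, not_lt] at hi; omega)

lemma Sq_zero (k : ℤ) : Sq k 0 = 0 := by simp [Sq]

lemma Sq_one (k : ℤ) : Sq k 1 = 1 := by simp [Sq, Fterm]

lemma chooseId (m s : ℕ) :
    (m+2).choose (s+2) + m.choose (s+2) = 2 * ((m+1).choose (s+2)) + m.choose s := by
  have h0 : (m+2).choose (s+2) = (m+1).choose (s+1) + (m+1).choose (s+2) :=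
    Nat.choose_succ_succ (m+1) (s+1)
  have h1 : (m+1).choose (s+1) = m.choose s + m.choose (s+1) := Nat.choose_succ_succ m s
  have h2 : (m+1).choose (s+2) = m.choose (s+1) + m.choose (s+2) := Nat.choose_succ_succ m (s+1)
  omega

lemma term_identity (k : ℤ) (j i : ℕ) :
    Fterm k (j+2) (i+1) - 2 * Fterm k (j+1) (i+1) + Fterm k j (i+1)
      = -k^2 * Fterm k (j+1) i := by
  unfold Fterm
  have e1 : j+2+(i+1) = (j+i+1)+2 := by omega
  have e2 : j+1+(i+1) = (j+i+1)+1 := by omega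
  have e3 : j+(i+1) = j+i+1 := by omega
  have e4 : 2*(i+1)+1 = (2*i+1)+2 := by omega
  have e5 : j+1+i = j+i+1 := by omega
  rw [e1, e2, e3, e4, e5]
  have hcz : (((j+i+1)+2).choose ((2*i+1)+2) : ℤ) + ((j+i+1).choose ((2*i+1)+2) : ℤ)
      = 2*((((j+i+1)+1)).choose ((2*i+1)+2) : ℤ) + ((j+i+1).choose (2*i+1) : ℤ) := by
    exact_mod_cast chooseId (j+i+1) (2*i+1)
  linear_combination ((-1:ℤ)^(i+1) * k^(2*(i+1))) * hcz

lemma Sq_rec (k : ℤ) (j : ℕ) : Sq k (j+2) = (2 - k^2) * Sq k (j+1) - Sq k j := by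
  have key : Sq k (j+2) - 2 * Sq k (j+1) + Sq k j = -k^2 * Sq k (j+1) := by
    have e2 : Sq k (j+2) = ∑ i ∈ Finset.range (j+2), Fterm k (j+2) i := rfl
    have e1 : Sq k (j+1) = ∑ i ∈ Finset.range (j+2), Fterm k (j+1) i := Sq_ext k (by omega)
    have e0 : Sq k j = ∑ i ∈ Finset.range (j+2), Fterm k j i := Sq_ext k (by omega)
    rw [e2, e1, e0]
    conv_rhs => rw [Finset.mul_sum, Finset.sum_range_succ,
      show Fterm k (j+1) (j+1) = 0 from Fterm_eq_zero (le_refl _), mul_zero, add_zero]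
    conv_lhs => rw [Finset.mul_sum]
    rw [← Finset.sum_sub_distrib, ← Finset.sum_add_distrib]
    rw [Finset.sum_range_succ']
    have hG0 : Fterm k (j+2) 0 - 2 * Fterm k (j+1) 0 + Fterm k j 0 = 0 := by
      simp [Fterm, Nat.choose_one_right]
      ring
    rw [hG0, add_zero]
    apply Finset.sum_congr rfl
    intro i _
    exact term_identity k j i
  linarith

def cInt (k : ℤ) (j : ℕ) : ℤ := (-1)^j * (Sq k (j+1) - (1 - k^2) * Sq k j)
def bInt (k : ℤ) (j : ℕ) : ℤ := (-1)^(j+1) * (k * Sq k j)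

lemma cInt_rec (k : ℤ) (j : ℕ) : cInt k (j+1) = -(cInt k j + bInt k j * k) := by
  unfold cInt bInt
  rw [Sq_rec]
  ring

lemma bInt_rec (k : ℤ) (j : ℕ) :
    bInt k (j+1) = -bInt k j + (cInt k j + bInt k j * k) * k := by
  unfold cInt bInt
  ring

lemma matE_mul_matE {N : ℕ} (a : ZMod N) : matE a * matE a = a • matE a - 1 := by
  ext i j
  fin_cases i <;> fin_cases j <;>
    simp [matE, Matrix.mul_apply, Fin.sum_univ_two, Matrix.one_apply] <;> ring

lemma comb_mul {N : ℕ} (a x y : ZMod N) :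
    (x • (1 : Matrix (Fin 2) (Fin 2) (ZMod N)) + y • matE a) * matE a
      = (-y) • 1 + (x + y * a) • matE a := by
  rw [add_mul, smul_mul_assoc, one_mul, smul_mul_assoc, matE_mul_matE, smul_sub, smul_smul,
    add_smul, neg_smul]
  have : y * a = a * y := mul_comm _ _
  rw [this]
  abel

lemma powf (N : ℕ) (k : ℤ) (j : ℕ) :
    (matE (k : ZMod N))^(2*j)
      = ((cInt k j : ℤ) : ZMod N) • 1 + ((bInt k j : ℤ) : ZMod N) • matE (k : ZMod N) := by
  induction j with
  | zero => simp [cInt, bInt, Sq_zero, Sq_one]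
  | succ j ih =>
    have h2 : 2*(j+1) = (2*j + 1) + 1 := by omega
    rw [h2, pow_succ, pow_succ, ih, comb_mul, comb_mul]
    have hc : ((cInt k (j+1) : ℤ) : ZMod N)
        = -(((cInt k j : ℤ) : ZMod N) + ((bInt k j : ℤ) : ZMod N) * ((k : ℤ) : ZMod N)) := by
      rw [cInt_rec]; push_cast; ring
    have hb : ((bInt k (j+1) : ℤ) : ZMod N)
        = -((bInt k j : ℤ) : ZMod N)
          + (((cInt k j : ℤ) : ZMod N) + ((bInt k j : ℤ) : ZMod N) * ((k : ℤ) : ZMod N))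
            * ((k : ℤ) : ZMod N) := by
      rw [bInt_rec]; push_cast; ring
    rw [hc, hb]

lemma powf_odd (N : ℕ) (k : ℤ) (j : ℕ) :
    (matE (k : ZMod N))^(2*j+1)
      = (-((bInt k j : ℤ) : ZMod N)) • 1
        + (((cInt k j : ℤ) : ZMod N) + ((bInt k j : ℤ) : ZMod N) * ((k : ℤ) : ZMod N))
            • matE (k : ZMod N) := by
  rw [pow_succ, powf, comb_mul]

lemma comb_eq {N : ℕ} {a x y z : ZMod N}
    (h : x • (1 : Matrix (Fin 2) (Fin 2) (ZMod N)) + y • matE a = z • 1) :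
    x = z ∧ y = 0 := by
  have h10 := congrFun (congrFun h 1) 0
  have h11 := congrFun (congrFun h 1) 1
  simp [matE, Matrix.one_apply] at h10 h11
  exact ⟨h11, h10⟩

lemma Sq_peel (k : ℤ) (j : ℕ) :
    Sq k (j+1) = ((j:ℤ)+1) + ∑ i ∈ Finset.range j, Fterm k (j+1) (i+1) := by
  show (∑ i ∈ Finset.range (j+1), Fterm k (j+1) i) = _
  rw [Finset.sum_range_succ']
  have h0 : Fterm k (j+1) 0 = (j:ℤ)+1 := by
    simp [Fterm, Nat.choose_one_right]
  rw [h0, add_comm]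

lemma Sdiff (k : ℤ) (j : ℕ) :
    Sq k (j+1) - Sq k j
      = 1 + ∑ i ∈ Finset.range j, (-1:ℤ)^(i+1) * ((j+i+1).choose (2*(i+1)) : ℤ) * k^(2*(i+1)) := by
  have e0 : Sq k j = ∑ i ∈ Finset.range (j+1), Fterm k j i := Sq_ext k (by omega)
  have e1 : Sq k (j+1) = ∑ i ∈ Finset.range (j+1), Fterm k (j+1) i := rfl
  rw [e1, e0, ← Finset.sum_sub_distrib]
  have hterm : ∀ i, Fterm k (j+1) i - Fterm k j i
      = (-1:ℤ)^i * ((j+i).choose (2*i) : ℤ) * k^(2*i) := by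
    intro i
    unfold Fterm
    have e : j+1+i = j+i+1 := by omega
    have hch : (j+i+1).choose (2*i+1) = (j+i).choose (2*i) + (j+i).choose (2*i+1) :=
      Nat.choose_succ_succ (j+i) (2*i)
    rw [e, hch]
    push_cast
    ring
  rw [Finset.sum_congr rfl (fun i _ => hterm i), Finset.sum_range_succ']
  have h0 : (-1:ℤ)^0 * ((j+0).choose (2*0) : ℤ) * k^(2*0) = 1 := by simp
  rw [h0, add_comm]
  congr 1

lemma Sdiff_sub_one_dvd (k : ℤ) (j : ℕ) : k^2 ∣ (Sq k (j+1) - Sq k j - 1) := by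
  rw [Sdiff]
  rw [add_comm, add_sub_cancel_right]
  apply Finset.dvd_sum
  intro i _
  have h1 : (k:ℤ)^2 ∣ k^(2*(i+1)) := pow_dvd_pow k (by omega)
  exact h1.mul_left _


section NT

variable {p β : ℕ} {k : ℤ}

/-- Key divisibility for a single term of the sum. -/
lemma termdvd (hp : p.Prime) (hβ : 1 ≤ β) (hk : (p:ℤ)^β ∣ k) (j w i : ℕ) (hw : (p:ℕ)^w ∣ j) (hi : 1 ≤ i) :
    (p:ℤ)^(w+β+1) ∣ k^(2*i+1) * ((j+i).choose (2*i+1) : ℤ) := by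
  obtain ⟨c, q, hfact, hq, hc⟩ := fact_split_odd p hp i hi
  have hdesc : (j+i).descFactorial (2*i+1) = (2*i+1)! * ((j+i).choose (2*i+1)) :=
    Nat.descFactorial_eq_factorial_mul_choose _ _
  have hjD : j ∣ (j+i).descFactorial (2*i+1) := by
    rw [Nat.descFactorial_eq_prod_range]
    have hmem : i ∈ Finset.range (2*i+1) := by simp; omega
    have := Finset.dvd_prod_of_mem (fun l => j + i - l) hmem
    simpa using this
  set W := w + (2*i+1)*β with hW
  have h1 : (p:ℤ)^W ∣ (j:ℤ) * k^(2*i+1) := by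
    rw [hW, pow_add]
    apply mul_dvd_mul
    · exact_mod_cast Int.natCast_dvd_natCast.mpr hw
    · calc ((p:ℤ)^((2*i+1)*β)) = ((p:ℤ)^β)^(2*i+1) := by rw [← pow_mul, mul_comm]
        _ ∣ k^(2*i+1) := pow_dvd_pow_of_dvd hk _
  have h2 : (j:ℤ) * k^(2*i+1) ∣ ((j+i).descFactorial (2*i+1) : ℤ) * k^(2*i+1) :=
    mul_dvd_mul_right (Int.natCast_dvd_natCast.mpr hjD) _
  have h3 : ((j+i).descFactorial (2*i+1) : ℤ) * k^(2*i+1)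
      = (p:ℤ)^c * ((q:ℤ) * (((j+i).choose (2*i+1) : ℤ) * k^(2*i+1))) := by
    rw [hdesc, hfact]; push_cast; ring
  have h4 : (p:ℤ)^W ∣ (p:ℤ)^c * ((q:ℤ) * (((j+i).choose (2*i+1) : ℤ) * k^(2*i+1))) := by
    rw [← h3]; exact h1.trans h2
  have h2iβ : 2*i ≤ 2*i*β := Nat.le_mul_of_pos_right _ (by omega)
  have hsplit : (2*i+1)*β = 2*i*β + β := by ring
  have hcle : c + (w + β + 1) ≤ W := by
    rw [hW]; omega
  have h5 : (p:ℤ)^(W - c) ∣ (q:ℤ) * (((j+i).choose (2*i+1) : ℤ) * k^(2*i+1)) := by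
    have hpne : ((p:ℤ))^c ≠ 0 := pow_ne_zero _ (by exact_mod_cast hp.ne_zero)
    rw [show W = c + (W - c) by omega, pow_add] at h4
    exact (mul_dvd_mul_iff_left hpne).mp h4
  have hcop : IsCoprime ((p:ℤ)^(W-c)) (q:ℤ) := by
    have : Nat.Coprime (p^(W-c)) q := ((hp.coprime_iff_not_dvd).mpr hq).pow_left _
    exact_mod_cast Nat.isCoprime_iff_coprime.mpr this
  have h6 : (p:ℤ)^(W-c) ∣ ((j+i).choose (2*i+1) : ℤ) * k^(2*i+1) :=
    hcop.dvd_of_dvd_mul_left h5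
  have h7 : (p:ℤ)^(w+β+1) ∣ (p:ℤ)^(W-c) := pow_dvd_pow _ (by omega)
  have := h7.trans h6
  rwa [mul_comm] at this

lemma termdvd2 (hp : p.Prime) (hβ : 1 ≤ β) (hk : (p:ℤ)^β ∣ k) (j w i : ℕ) (hw : (p:ℕ)^w ∣ j) :
    (p:ℤ)^(w+β) ∣ k^(2*(i+1)) * ((j+i+1).choose (2*(i+1)) : ℤ) := by
  obtain ⟨c, q, hfact, hq, hc⟩ := fact_split_even p hp i
  have hdesc : (j+i+1).descFactorial (2*i+2) = (2*i+2)! * ((j+i+1).choose (2*i+2)) :=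
    Nat.descFactorial_eq_factorial_mul_choose _ _
  have hjD : j ∣ (j+i+1).descFactorial (2*i+2) := by
    rw [Nat.descFactorial_eq_prod_range]
    have hmem : i+1 ∈ Finset.range (2*i+2) := by simp; omega
    have := Finset.dvd_prod_of_mem (fun l => j + i + 1 - l) hmem
    simpa using this
  set W := w + (2*i+2)*β with hW
  have h1 : (p:ℤ)^W ∣ (j:ℤ) * k^(2*i+2) := by
    rw [hW, pow_add]
    apply mul_dvd_mul
    · exact_mod_cast Int.natCast_dvd_natCast.mpr hw
    · calc ((p:ℤ)^((2*i+2)*β)) = ((p:ℤ)^β)^(2*i+2) := by rw [← pow_mul, mul_comm]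
        _ ∣ k^(2*i+2) := pow_dvd_pow_of_dvd hk _
  have h2 : (j:ℤ) * k^(2*i+2) ∣ ((j+i+1).descFactorial (2*i+2) : ℤ) * k^(2*i+2) :=
    mul_dvd_mul_right (Int.natCast_dvd_natCast.mpr hjD) _
  have h3 : ((j+i+1).descFactorial (2*i+2) : ℤ) * k^(2*i+2)
      = (p:ℤ)^c * ((q:ℤ) * (((j+i+1).choose (2*i+2) : ℤ) * k^(2*i+2))) := by
    rw [hdesc, hfact]; push_cast; ring
  have h4 : (p:ℤ)^W ∣ (p:ℤ)^c * ((q:ℤ) * (((j+i+1).choose (2*i+2) : ℤ) * k^(2*i+2))) := by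
    rw [← h3]; exact h1.trans h2
  have h2iβ : 2*i+1 ≤ (2*i+1)*β := Nat.le_mul_of_pos_right _ (by omega)
  have hsplit : (2*i+2)*β = (2*i+1)*β + β := by ring
  have hcle : c + (w + β) ≤ W := by rw [hW]; omega
  have h5 : (p:ℤ)^(W - c) ∣ (q:ℤ) * (((j+i+1).choose (2*i+2) : ℤ) * k^(2*i+2)) := by
    have hpne : ((p:ℤ))^c ≠ 0 := pow_ne_zero _ (by exact_mod_cast hp.ne_zero)
    rw [show W = c + (W - c) by omega, pow_add] at h4
    exact (mul_dvd_mul_iff_left hpne).mp h4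
  have hcop : IsCoprime ((p:ℤ)^(W-c)) (q:ℤ) := by
    have : Nat.Coprime (p^(W-c)) q := ((hp.coprime_iff_not_dvd).mpr hq).pow_left _
    exact_mod_cast Nat.isCoprime_iff_coprime.mpr this
  have h6 : (p:ℤ)^(W-c) ∣ ((j+i+1).choose (2*i+2) : ℤ) * k^(2*i+2) :=
    hcop.dvd_of_dvd_mul_left h5
  have h7 : (p:ℤ)^(w+β) ∣ (p:ℤ)^(W-c) := pow_dvd_pow _ (by omega)
  have h8 := h7.trans h6
  rw [mul_comm] at h8
  have : 2*(i+1) = 2*i+2 := by omega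
  rw [this]
  exact h8

end NT

section NT
variable {p β α : ℕ} {k : ℤ}

lemma NT1 (hp : p.Prime) (hβ : 1 ≤ β) (hβα : β ≤ α) (hk : (p:ℤ)^β ∣ k)
    (j : ℕ) (hj : (p:ℕ)^(α-β) ∣ j) : (p:ℤ)^α ∣ k * Sq k j := by
  cases j with
  | zero => simp [Sq]
  | succ j =>
    rw [Sq_peel, mul_add, Finset.mul_sum]
    apply dvd_add
    · have h1 : (p:ℤ)^(α-β) ∣ ((j:ℤ)+1) := by
        have := Int.natCast_dvd_natCast.mpr hj
        push_cast at this
        exact this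
      have : (p:ℤ)^α = (p:ℤ)^β * (p:ℤ)^(α-β) := by
        rw [← pow_add]
        congr 1
        omega
      rw [this]
      exact mul_dvd_mul hk h1
    · apply Finset.dvd_sum
      intro i _
      have hd := termdvd hp hβ hk (j+1) (α-β) (i+1) hj (by omega)
      have he : k * Fterm k (j+1) (i+1)
          = (-1:ℤ)^(i+1) * (k^(2*(i+1)+1) * (((j+1)+(i+1)).choose (2*(i+1)+1) : ℤ)) := by
        unfold Fterm
        ring
      rw [he]
      have : (p:ℤ)^α ∣ (p:ℤ)^((α-β)+β+1) := pow_dvd_pow _ (by omega)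
      exact Dvd.dvd.mul_left (this.trans hd) _

lemma NT2 (hp : p.Prime) (hβ : 1 ≤ β) (hβα : β ≤ α) {k' : ℤ}
    (hkeq : k = (p:ℤ)^β * k') (hk' : ¬ (p:ℤ) ∣ k')
    (j : ℕ) (hj0 : j ≠ 0) (h : (p:ℤ)^α ∣ k * Sq k j) : (p:ℕ)^(α-β) ∣ j := by
  have hk : (p:ℤ)^β ∣ k := ⟨k', hkeq⟩
  by_contra hcon
  set w := j.factorization p with hwdef
  have hw : (p:ℕ)^w ∣ j := Nat.ordProj_dvd _ _
  have hw' : ¬ p ∣ j / p^w := Nat.not_dvd_ordCompl hp hj0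
  have hwα : w + β + 1 ≤ α := by
    have hlt : w < α - β := by
      by_contra hge
      exact hcon ((pow_dvd_pow p (by omega)).trans hw)
    omega
  obtain ⟨j', hj'⟩ : ∃ j', j = p^w * j' ∧ ¬ p ∣ j' := ⟨j / p^w, (Nat.ordProj_mul_ordCompl_eq_self j p).symm, hw'⟩
  obtain ⟨hjeq, hj'nd⟩ := hj'
  -- sum part
  obtain ⟨m, hm⟩ : ∃ m, j = m + 1 := ⟨j - 1, by omega⟩
  have hsum : (p:ℤ)^(w+β+1) ∣ k * Sq k j - k * ((m:ℤ)+1) := by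
    rw [hm, Sq_peel, mul_add, Finset.mul_sum, add_sub_cancel_left]
    apply Finset.dvd_sum
    intro i _
    have hd := termdvd hp hβ hk (m+1) w (i+1) (hm ▸ hw) (by omega)
    have he : k * Fterm k (m+1) (i+1)
        = (-1:ℤ)^(i+1) * (k^(2*(i+1)+1) * (((m+1)+(i+1)).choose (2*(i+1)+1) : ℤ)) := by
      unfold Fterm; ring
    rw [he]
    exact Dvd.dvd.mul_left hd _
  have hks : (p:ℤ)^(w+β+1) ∣ k * Sq k j := (pow_dvd_pow _ hwα).trans h
  have hkj : (p:ℤ)^(w+β+1) ∣ k * ((m:ℤ)+1) := by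
    have he : k * Sq k j - (k * Sq k j - k * ((m:ℤ)+1)) = k * ((m:ℤ)+1) := by ring
    exact he ▸ dvd_sub hks hsum
  have hjz : ((m:ℤ)+1) = (p:ℤ)^w * (j':ℤ) := by
    have h1 : ((j:ℕ):ℤ) = ((p^w * j' : ℕ) : ℤ) := by exact_mod_cast congrArg (Nat.cast : ℕ → ℤ) hjeq
    push_cast at h1
    rw [hm] at h1
    push_cast at h1
    linarith
  have hfinal : (p:ℤ)^(w+β) * (p:ℤ) ∣ (p:ℤ)^(w+β) * (k' * (j':ℤ)) := by
    have he2 : k * ((m:ℤ)+1) = (p:ℤ)^(w+β) * (k' * (j':ℤ)) := by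
      rw [hkeq, hjz, pow_add]; ring
    have he3 : (p:ℤ)^(w+β+1) = (p:ℤ)^(w+β) * (p:ℤ) := by rw [pow_succ]
    rw [← he2, ← he3]
    exact hkj
  have hpd : (p:ℤ) ∣ k' * (j':ℤ) := by
    have hpne : ((p:ℤ))^(w+β) ≠ 0 := pow_ne_zero _ (by exact_mod_cast hp.ne_zero)
    exact (mul_dvd_mul_iff_left hpne).mp hfinal
  have hpz : Prime ((p:ℕ):ℤ) := Int.prime_iff_natAbs_prime.mpr (by simpa using hp)
  rcases (Prime.dvd_mul hpz).mp hpd with hca | hca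
  · exact hk' hca
  · exact hj'nd (Int.natCast_dvd_natCast.mp hca)

lemma NT3 (hp : p.Prime) (hβ : 1 ≤ β) (hβα : β ≤ α) (hk : (p:ℤ)^β ∣ k)
    (j : ℕ) (hj : (p:ℕ)^(α-β) ∣ j) : (p:ℤ)^α ∣ (Sq k (j+1) - Sq k j - 1) := by
  rw [Sdiff, add_comm, add_sub_cancel_right]
  apply Finset.dvd_sum
  intro i _
  have hd := termdvd2 (i := i) hp hβ hk j (α-β) hj
  have he : (-1:ℤ)^(i+1) * ((j+i+1).choose (2*(i+1)) : ℤ) * k^(2*(i+1))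
      = (-1:ℤ)^(i+1) * (k^(2*(i+1)) * ((j+i+1).choose (2*(i+1)) : ℤ)) := by ring
  rw [he]
  have hpow : (p:ℤ)^α ∣ (p:ℤ)^((α-β)+β) := pow_dvd_pow _ (by omega)
  exact (hpow.trans hd).mul_left _

end NT

theorem stmt11 (r : ℕ) (hr : 1 ≤ r) (p α β : Fin r → ℕ)
    (hp : ∀ i, (p i).Prime) (hdist : ∀ i j, i ≠ j → p i ≠ p j)
    (hβ : ∀ i, 1 ≤ β i) (hβα : ∀ i, β i ≤ α i)
    (N : ℕ) (hN : N = ∏ i, p i ^ α i)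
    (a : ℤ) (ha : ∀ i, ¬ (p i : ℤ) ∣ a)
    (k : ℤ) (hk : k = a * ∏ i, (p i : ℤ) ^ β i) :
    minMonSize (k : ZMod N) (2 * ∏ i, p i ^ (α i - β i)) := by
  have i0 : Fin r := ⟨0, hr⟩
  set d := ∏ i, p i ^ (α i - β i) with hd
  have hpz : ∀ i, Prime ((p i : ℤ)) := fun i =>
    Int.prime_iff_natAbs_prime.mpr (by simpa using hp i)
  have hkdvd : ∀ i, ((p i : ℤ))^(β i) ∣ k := by
    intro i
    rw [hk]
    exact Dvd.dvd.mul_left (Finset.dvd_prod_of_mem _ (Finset.mem_univ i)) a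
  have hkfac : ∀ i, ∃ k', k = ((p i : ℤ))^(β i) * k' ∧ ¬ (p i : ℤ) ∣ k' := by
    intro i
    refine ⟨a * ∏ l ∈ Finset.univ.erase i, (p l : ℤ)^(β l), ?_, ?_⟩
    · rw [hk, ← Finset.prod_erase_mul _ _ (Finset.mem_univ i)]
      ring
    · intro hdvd
      rcases (hpz i).dvd_mul.mp hdvd with h | h
      · exact ha i h
      · obtain ⟨l, hl, hdl⟩ := Prime.exists_mem_finset_dvd (hpz i) h
        have hne : l ≠ i := (Finset.mem_erase.mp hl).1
        have : (p i : ℤ) ∣ (p l : ℤ) := (hpz i).dvd_of_dvd_pow hdl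
        have : p i ∣ p l := Int.natCast_dvd_natCast.mp this
        have := (Nat.prime_dvd_prime_iff_eq (hp i) (hp l)).mp this
        exact hdist l i hne (this.symm)
  have hNdvd : ∀ i, ((p i : ℤ))^(α i) ∣ (N:ℤ) := by
    intro i
    rw [hN]
    push_cast
    exact Finset.dvd_prod_of_mem _ (Finset.mem_univ i)
  have hpairα : Set.Pairwise (Finset.univ : Finset (Fin r)) fun i l =>
      IsCoprime (((p i:ℤ))^(α i)) (((p l:ℤ))^(α l)) := by
    intro i _ l _ hne
    have : Nat.Coprime ((p i)^(α i)) ((p l)^(α l)) :=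
      (((Nat.coprime_primes (hp i) (hp l)).mpr (hdist i l hne))).pow _ _
    exact_mod_cast Nat.isCoprime_iff_coprime.mpr this
  have hprodNdvd : ∀ x : ℤ, (∀ i, ((p i:ℤ))^(α i) ∣ x) → (N:ℤ) ∣ x := by
    intro x hx
    rw [hN]
    push_cast
    exact Finset.prod_dvd_of_coprime hpairα (fun i _ => hx i)
  have hdvd_d : ∀ i, (p i)^(α i - β i) ∣ d := fun i =>
    Finset.dvd_prod_of_mem _ (Finset.mem_univ i)
  have hdpos : 0 < d := Finset.prod_pos (fun i _ => pow_pos (hp i).pos _)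
  have hprodddvd : ∀ j : ℕ, (∀ i, (p i)^(α i - β i) ∣ j) → d ∣ j := by
    intro j hx
    have hpair : Set.Pairwise (Finset.univ : Finset (Fin r)) fun i l =>
        IsCoprime (((p i:ℤ))^(α i - β i)) (((p l:ℤ))^(α l - β l)) := by
      intro i _ l _ hne
      have : Nat.Coprime ((p i)^(α i - β i)) ((p l)^(α l - β l)) :=
        (((Nat.coprime_primes (hp i) (hp l)).mpr (hdist i l hne))).pow _ _
      exact_mod_cast Nat.isCoprime_iff_coprime.mpr this
    have : ((d:ℕ):ℤ) ∣ (j:ℤ) := by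
      rw [hd]
      push_cast
      exact Finset.prod_dvd_of_coprime hpair
        (fun i _ => by exact_mod_cast Int.natCast_dvd_natCast.mpr (hx i))
    exact_mod_cast this
  have hNkS : (N:ℤ) ∣ k * Sq k d :=
    hprodNdvd _ (fun i => NT1 (hp i) (hβ i) (hβα i) (hkdvd i) d (hdvd_d i))
  refine ⟨by omega, ?_, ?_⟩
  · -- existence
    have hb0 : (N:ℤ) ∣ bInt k d := Dvd.dvd.mul_left hNkS _
    have hc1 : (N:ℤ) ∣ (cInt k d - (-1)^d) := by
      have h2 : (N:ℤ) ∣ (Sq k (d+1) - Sq k d - 1) :=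
        hprodNdvd _ (fun i => NT3 (hp i) (hβ i) (hβα i) (hkdvd i) d (hdvd_d i))
      have he : cInt k d - (-1)^d
          = (-1:ℤ)^d * ((Sq k (d+1) - Sq k d - 1) + k * (k * Sq k d)) := by
        unfold cInt
        ring
      rw [he]
      exact (h2.add (hNkS.mul_left k)).mul_left _
    have hE : (matE (k:ZMod N))^(2*d) = (((-1:ℤ)^d : ℤ) : ZMod N) • 1 := by
      rw [powf]
      have hb0' : ((bInt k d : ℤ) : ZMod N) = 0 :=
        (ZMod.intCast_zmod_eq_zero_iff_dvd _ _).mpr hb0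
      have hc1' : ((cInt k d : ℤ) : ZMod N) = (((-1:ℤ)^d : ℤ) : ZMod N) := by
        have h0 := (ZMod.intCast_zmod_eq_zero_iff_dvd _ _).mpr hc1
        push_cast at h0 ⊢
        linear_combination h0
      rw [hb0', hc1', zero_smul, add_zero]
    rcases Nat.even_or_odd d with hev | hod
    · left
      rw [hE, hev.neg_one_pow]
      norm_num
    · right
      rw [hE, hod.neg_one_pow]
      norm_num
  · -- minimality
    intro m hm hsol
    rcases Nat.even_or_odd m with hev | hod
    · obtain ⟨j, hj⟩ := hev
      have hj2 : m = 2*j := by omega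
      have hjpos : j ≠ 0 := by omega
      have hb : ((bInt k j : ℤ) : ZMod N) = 0 := by
        rcases hsol with h | h <;> rw [hj2, powf] at h
        · exact (comb_eq (z := (1 : ZMod N)) (h.trans (one_smul _ _).symm)).2
        · exact (comb_eq (z := (-1 : ZMod N))
            (h.trans (show (-1 : Matrix (Fin 2) (Fin 2) (ZMod N)) = (-1:ZMod N) • 1 by
              rw [neg_smul, one_smul]))).2
      have hNb : (N:ℤ) ∣ bInt k j := (ZMod.intCast_zmod_eq_zero_iff_dvd _ _).mp hb
      have hNks : (N:ℤ) ∣ k * Sq k j := by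
        have heq : (-1:ℤ)^(j+1) * bInt k j = k * Sq k j := by
          unfold bInt
          rw [← mul_assoc, ← pow_add]
          rw [Even.neg_one_pow ⟨j+1, by ring⟩, one_mul]
        exact heq ▸ hNb.mul_left _
      have hdj : ∀ i, (p i)^(α i - β i) ∣ j := by
        intro i
        obtain ⟨k', hke, hk'⟩ := hkfac i
        exact NT2 (hp i) (hβ i) (hβα i) hke hk' j hjpos ((hNdvd i).trans hNks)
      have hddvd : d ∣ j := hprodddvd j hdj
      have : d ≤ j := Nat.le_of_dvd (by omega) hddvd
      omega
    · exfalso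
      obtain ⟨j, hj⟩ := hod
      have hcoef : ((cInt k j : ℤ) : ZMod N) + ((bInt k j : ℤ):ZMod N) * ((k:ℤ) : ZMod N) = 0 := by
        rcases hsol with h | h <;> rw [hj, powf_odd] at h
        · exact (comb_eq (z := (1 : ZMod N)) (h.trans (one_smul _ _).symm)).2
        · exact (comb_eq (z := (-1 : ZMod N))
            (h.trans (show (-1 : Matrix (Fin 2) (Fin 2) (ZMod N)) = (-1:ZMod N) • 1 by
              rw [neg_smul, one_smul]))).2
      have hNc : (N:ℤ) ∣ (cInt k j + bInt k j * k) := by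
        rw [← ZMod.intCast_zmod_eq_zero_iff_dvd]
        push_cast
        exact hcoef
      have hNd : (N:ℤ) ∣ (Sq k (j+1) - Sq k j) := by
        have heq : (-1:ℤ)^j * (cInt k j + bInt k j * k) = Sq k (j+1) - Sq k j := by
          unfold cInt bInt
          have hsq : (-1:ℤ)^j * (-1:ℤ)^j = 1 := by
            rw [← pow_add]; exact Even.neg_one_pow ⟨j, by ring⟩
          calc (-1:ℤ)^j * ((-1)^j * (Sq k (j+1) - (1 - k^2) * Sq k j)
                  + (-1)^(j+1) * (k * Sq k j) * k)
              = ((-1:ℤ)^j * (-1)^j) * (Sq k (j+1) - Sq k j) := by ring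
            _ = Sq k (j+1) - Sq k j := by rw [hsq, one_mul]
        exact heq ▸ hNc.mul_left _
      have hα0 : α i0 ≠ 0 := by have := hβ i0; have := hβα i0; omega
      have hpN : ((p i0 : ℕ):ℤ) ∣ (N:ℤ) := (dvd_pow_self _ hα0).trans (hNdvd i0)
      have hpk : ((p i0 : ℕ):ℤ) ∣ k := (dvd_pow_self _ (by have := hβ i0; omega)).trans (hkdvd i0)
      have h1 : ((p i0 : ℕ):ℤ) ∣ (Sq k (j+1) - Sq k j) := hpN.trans hNd
      have h2 : ((p i0 : ℕ):ℤ) ∣ (Sq k (j+1) - Sq k j - 1) :=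
        (dvd_pow hpk two_ne_zero).trans (Sdiff_sub_one_dvd k j)
      have h3 : ((p i0 : ℕ):ℤ) ∣ 1 := by
        have := dvd_sub h1 h2
        simpa using this
      have h4 : (p i0) ∣ 1 := by exact_mod_cast h3
      have := Nat.le_of_dvd one_pos h4
      have := (hp i0).two_le
      omega
end

section
/- Let N ≥ 2, k̄ ∈ ℤ/Nℤ, and let n be the size of the k̄-monomial minimal solution modulo N. For any m ≥ 1: (i) if (ā,k̄,...,k̄,b̄) ∈ (ℤ/Nℤ)^{nm} satisfies M_{nm}(ā,k̄,...,k̄,b̄) = ±Id, then ā = b̄ = k̄; (ii) there is no (ā,k̄,...,k̄,b̄) of length nm+1 with M_{nm+1}(ā,k̄,...,k̄,b̄) = ±Id; (iii) if (ā,k̄,...,k̄,b̄) ∈ (ℤ/Nℤ)^{nm+2} satisfies M_{nm+2}(ā,k̄,...,k̄,b̄) = ±Id, then ā = b̄ = 0̄. -/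
/-- `M_n(a₁,…,aₙ)` for a tuple given as a list. -/
def Mlist {N : ℕ} (l : List (ZMod N)) : Matrix (Fin 2) (Fin 2) (ZMod N) :=
  (l.map matE).reverse.prod

/-- A tuple is a solution of `(E_N)` if its matrix equals `±Id`. -/
def IsSolL {N : ℕ} (l : List (ZMod N)) : Prop := Mlist l = 1 ∨ Mlist l = -1

/-- The sum `⊕` of two tuples. -/
def oplus {N : ℕ} (a b : List (ZMod N)) : List (ZMod N) :=
  (a.head?.getD 0 + b.getLast?.getD 0) ::
    (a.tail.dropLast ++ ((a.getLast?.getD 0 + b.head?.getD 0) :: b.tail.dropLast))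

/-- Equivalence: cyclic permutation of the tuple or of its reversal. -/
def EquivL {N : ℕ} (a b : List (ZMod N)) : Prop :=
  (∃ i, b = a.rotate i) ∨ (∃ i, b = a.reverse.rotate i)

/-- A solution is reducible if it is equivalent to a sum `a ⊕ b` with `b` a
solution of `(E_N)` and both sizes at least 3. -/
def Reducible {N : ℕ} (c : List (ZMod N)) : Prop :=
  ∃ a b : List (ZMod N), 3 ≤ a.length ∧ 3 ≤ b.length ∧ IsSolL b ∧ EquivL c (oplus a b)

lemma Mlist_mono {N : ℕ} (a b k : ZMod N) (j : ℕ) :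
    Mlist (a :: (List.replicate j k ++ [b])) = matE b * matE k ^ j * matE a := by
  simp [Mlist, List.reverse_append, List.map_replicate, mul_assoc]

lemma matE_left_inv {N : ℕ} (b : ZMod N) : !![0,1;-1,b] * matE b = 1 := by
  simp [matE, Matrix.mul_fin_two, Matrix.one_fin_two]

lemma neg_one_fin_two {N : ℕ} :
    (-1 : Matrix (Fin 2) (Fin 2) (ZMod N)) = !![-1, 0; 0, -1] := by
  rw [Matrix.one_fin_two]; ext i j; fin_cases i <;> fin_cases j <;> simp

lemma entryC {N : ℕ} (a b : ZMod N)
    (h : matE b * matE a = 1 ∨ matE b * matE a = -1) : a = 0 ∧ b = 0 := by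
  rcases h with h | h <;>
    rw [matE, matE, Matrix.mul_fin_two] at h
  · rw [Matrix.one_fin_two] at h
    have h1 := congrFun (congrFun h 1) 0
    have h2 := congrFun (congrFun h 0) 1
    simp at h1 h2
    exact ⟨h1, h2⟩
  · rw [neg_one_fin_two] at h
    have h1 := congrFun (congrFun h 1) 0
    have h2 := congrFun (congrFun h 0) 1
    simp at h1 h2
    exact ⟨h1, h2⟩

lemma entryA {N : ℕ} (a b k : ZMod N)
    (h : matE a = !![k, k*k-1-k*b; 1, k-b] ∨ matE a = -!![k, k*k-1-k*b; 1, k-b]) :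
    a = k ∧ b = k := by
  rcases h with h | h <;> rw [matE] at h
  · have e00 := congrFun (congrFun h 0) 0
    have e11 := congrFun (congrFun h 1) 1
    simp at e00 e11
    exact ⟨e00, by linear_combination e11⟩
  · have e00 := congrFun (congrFun h 0) 0
    have e11 := congrFun (congrFun h 1) 1
    have e10 := congrFun (congrFun h 1) 0
    simp [Matrix.neg_apply] at e00 e11 e10
    constructor
    · linear_combination e00 - k * e10
    · linear_combination -e11

lemma entryB {N : ℕ} (a b k : ZMod N) (hone : (1 : ZMod N) ≠ 0)
    (h : matE a = !![1, k-b; 0, 1] ∨ matE a = -!![1, k-b; 0, 1]) : False := by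
  rcases h with h | h <;> rw [matE] at h <;>
  · have e10 := congrFun (congrFun h 1) 0
    simp [Matrix.neg_apply] at e10
    exact hone e10

theorem stmt12 (N : ℕ) (hN : 2 ≤ N) (k : ZMod N) (n : ℕ)
    (hn : minMonSize k n) (m : ℕ) (hm : 1 ≤ m) :
    (∀ a b : ZMod N,
        IsSolL (a :: (List.replicate (n * m - 2) k ++ [b])) → a = k ∧ b = k) ∧
    (∀ a b : ZMod N,
        ¬ IsSolL (a :: (List.replicate (n * m - 1) k ++ [b]))) ∧
    (∀ a b : ZMod N,
        IsSolL (a :: (List.replicate (n * m) k ++ [b])) → a = 0 ∧ b = 0) := by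
  haveI : Fact (1 < N) := ⟨hN⟩
  have hone : (1 : ZMod N) ≠ 0 := one_ne_zero
  -- (matE k)^(n*m) = ±1
  have hη : matE k ^ (n * m) = 1 ∨ matE k ^ (n * m) = -1 := by
    rcases hn.2.1 with h | h
    · left; rw [pow_mul, h, one_pow]
    · rw [pow_mul, h]; exact neg_one_pow_eq_or _ m
  -- n ≥ 2
  have hn2 : 2 ≤ n := by
    rcases Nat.lt_or_ge n 2 with h | h
    · interval_cases n
      · exact absurd hn.1 (by simp)
      · exfalso
        rcases hn.2.1 with h1 | h1 <;>
        · rw [pow_one] at h1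
          have := congrFun (congrFun h1 1) 0
          simp [matE, Matrix.one_fin_two, neg_one_fin_two] at this
    · exact h
  have hnm2 : 2 ≤ n * m := le_trans (by norm_num) (Nat.mul_le_mul hn2 hm)
  -- From a solution with `j` middle entries `k`, extract the key equation.
  have key : ∀ (j : ℕ) (a b : ZMod N),
      IsSolL (a :: (List.replicate j k ++ [b])) →
      matE k ^ j * matE a = !![0, 1; -1, b] ∨
        matE k ^ j * matE a = -!![0, 1; -1, b] := by
    intro j a b h
    rcases h with h | h <;> rw [Mlist_mono] at h <;>
        [left; right] <;>
      · have h' := congrArg (HMul.hMul !![0, 1; -1, b]) h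
        rw [← mul_assoc, ← mul_assoc, matE_left_inv, one_mul] at h'
        first
          | rwa [mul_one] at h'
          | rwa [mul_neg_one] at h'
  refine ⟨?_, ?_, ?_⟩
  · -- length n*m
    intro a b h
    have hEq := key _ a b h
    have hsplit : matE k ^ (n * m) = matE k ^ 2 * matE k ^ (n * m - 2) := by
      rw [← pow_add]; congr 1; omega
    have hK2 : matE k ^ 2 * !![0, 1; -1, b] = !![k, k * k - 1 - k * b; 1, k - b] := by
      rw [matE, pow_two, Matrix.mul_fin_two, Matrix.mul_fin_two]
      congr 1 <;> ring_nf
    apply entryA a b k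
    rcases hEq with hEq | hEq <;> rcases hη with hη | hη
    · left
      have h2 : matE k ^ (n * m) * matE a = matE k ^ 2 * !![0, 1; -1, b] := by
        rw [hsplit, mul_assoc, hEq]
      rwa [hη, one_mul, hK2] at h2
    · right
      have h2 : matE k ^ (n * m) * matE a = matE k ^ 2 * !![0, 1; -1, b] := by
        rw [hsplit, mul_assoc, hEq]
      rw [hη, neg_one_mul, hK2] at h2
      exact neg_eq_iff_eq_neg.mp h2
    · right
      have h2 : matE k ^ (n * m) * matE a = -(matE k ^ 2 * !![0, 1; -1, b]) := by
        rw [hsplit, mul_assoc, hEq, mul_neg]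
      rwa [hη, one_mul, hK2] at h2
    · left
      have h2 : matE k ^ (n * m) * matE a = -(matE k ^ 2 * !![0, 1; -1, b]) := by
        rw [hsplit, mul_assoc, hEq, mul_neg]
      rw [hη, neg_one_mul, hK2] at h2
      exact neg_inj.mp h2
  · -- length n*m + 1 : impossible
    intro a b h
    have hEq := key _ a b h
    have hsplit : matE k ^ (n * m) = matE k * matE k ^ (n * m - 1) := by
      have h1 : n * m = (n * m - 1) + 1 := by omega
      conv_lhs => rw [h1]
      rw [pow_succ']
    have hK1 : matE k * !![0, 1; -1, b] = !![1, k - b; 0, 1] := by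
      rw [matE, Matrix.mul_fin_two]
      congr 1 <;> ring_nf
    apply entryB a b k hone
    rcases hEq with hEq | hEq <;> rcases hη with hη | hη
    · left
      have h2 : matE k ^ (n * m) * matE a = matE k * !![0, 1; -1, b] := by
        rw [hsplit, mul_assoc, hEq]
      rwa [hη, one_mul, hK1] at h2
    · right
      have h2 : matE k ^ (n * m) * matE a = matE k * !![0, 1; -1, b] := by
        rw [hsplit, mul_assoc, hEq]
      rw [hη, neg_one_mul, hK1] at h2
      exact neg_eq_iff_eq_neg.mp h2
    · right
      have h2 : matE k ^ (n * m) * matE a = -(matE k * !![0, 1; -1, b]) := by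
        rw [hsplit, mul_assoc, hEq, mul_neg]
      rwa [hη, one_mul, hK1] at h2
    · left
      have h2 : matE k ^ (n * m) * matE a = -(matE k * !![0, 1; -1, b]) := by
        rw [hsplit, mul_assoc, hEq, mul_neg]
      rw [hη, neg_one_mul, hK1] at h2
      exact neg_inj.mp h2
  · -- length n*m + 2
    intro a b h
    apply entryC a b
    rcases h with h | h <;> rw [Mlist_mono] at h <;> rcases hη with hη | hη
    · left; rwa [hη, mul_one] at h
    · right
      rw [hη, mul_neg_one, neg_mul] at h
      exact neg_eq_iff_eq_neg.mp h
    · right; rwa [hη, mul_one] at h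
    · left
      rw [hη, mul_neg_one, neg_mul] at h
      have h' := neg_eq_iff_eq_neg.mp h
      rwa [neg_neg] at h'
end

section
/- Let p be an odd prime with p ≡ 1 (mod 3), let N = 3p, and let k = p + 2. Then the size of the k̄-monomial minimal solution modulo N is exactly 4p. -/
lemma matE_map_s13 {N M : ℕ} (f : ZMod N →+* ZMod M) (a : ZMod N) :
    (matE a).map f = matE (f a) := by
  ext i j
  fin_cases i <;> fin_cases j <;> simp [matE]

lemma matE_pow_map {N M : ℕ} (f : ZMod N →+* ZMod M) (a : ZMod N) (m : ℕ) :
    (matE a ^ m).map f = matE (f a) ^ m := by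
  rw [← matE_map_s13 f a, ← RingHom.mapMatrix_apply, ← RingHom.mapMatrix_apply, map_pow]

lemma matE_two_pow {p : ℕ} (m : ℕ) :
    (matE (2 : ZMod p)) ^ m = !![(m : ZMod p) + 1, -(m:ZMod p); (m:ZMod p), 1 - m] := by
  induction m with
  | zero => simp [matE, Matrix.one_fin_two]
  | succ n ih =>
    rw [pow_succ, ih]
    ext i j
    fin_cases i <;> fin_cases j <;>
      simp [matE, Matrix.mul_apply, Fin.sum_univ_two] <;> ring

lemma matE_zero_pow_eq_one_iff (m : ℕ) :
    matE (0 : ZMod 3) ^ m = 1 ↔ 4 ∣ m := by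
  have h4 : matE (0 : ZMod 3) ^ 4 = 1 := by decide
  constructor
  · intro h
    have hm : matE (0 : ZMod 3) ^ (m % 4) = 1 := by
      calc matE (0 : ZMod 3) ^ (m % 4)
          = matE (0 : ZMod 3) ^ (m % 4) * (matE (0 : ZMod 3) ^ 4) ^ (m / 4) := by
            rw [h4]; simp
        _ = matE (0 : ZMod 3) ^ (m % 4 + 4 * (m / 4)) := by rw [← pow_mul, ← pow_add]
        _ = 1 := by rw [Nat.mod_add_div, h]
    have hlt : m % 4 < 4 := Nat.mod_lt _ (by norm_num)
    interval_cases h : m % 4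
    · exact Nat.dvd_of_mod_eq_zero h
    · exfalso; revert hm; decide
    · exfalso; revert hm; decide
    · exfalso; revert hm; decide
  · rintro ⟨c, rfl⟩
    rw [pow_mul, h4, one_pow]

theorem stmt13 (p : ℕ) (hp : p.Prime) (hodd : Odd p) (hp3 : p % 3 = 1) :
    minMonSize (((p : ℤ) + 2 : ℤ) : ZMod (3 * p)) (4 * p) := by
  have hp0 : 0 < p := hp.pos
  have hp2 : p ≠ 2 := by rintro rfl; exact (by decide : ¬ Odd 2) hodd
  haveI : NeZero p := ⟨hp.ne_zero⟩
  haveI : Fact p.Prime := ⟨hp⟩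
  have hdvd3 : (3 : ℕ) ∣ 3 * p := ⟨p, rfl⟩
  have hdvdp : p ∣ 3 * p := ⟨3, by ring⟩
  set k : ZMod (3 * p) := (((p : ℤ) + 2 : ℤ) : ZMod (3 * p)) with hk
  let f3 : ZMod (3 * p) →+* ZMod 3 := ZMod.castHom hdvd3 (ZMod 3)
  let fp : ZMod (3 * p) →+* ZMod p := ZMod.castHom hdvdp (ZMod p)
  have hf3k : f3 k = 0 := by
    have h : f3 k = ((p : ZMod 3) + 2) := by
      rw [hk, map_intCast]; push_cast; ring
    rw [h]
    have hpmod : (p : ZMod 3) = 1 := by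
      conv_lhs => rw [← Nat.mod_add_div p 3]
      push_cast [hp3]
      rw [show (3 : ZMod 3) = 0 by decide]
      ring
    rw [hpmod]; decide
  have hfpk : fp k = 2 := by
    have h : fp k = ((p : ZMod p) + 2) := by
      rw [hk, map_intCast]; push_cast; ring
    rw [h, ZMod.natCast_self, zero_add]
  -- mod p analysis
  have hmodp : ∀ m : ℕ, matE k ^ m = 1 → (p : ℕ) ∣ m := by
    intro m h
    have h' : (matE k ^ m).map fp = (1 : Matrix (Fin 2) (Fin 2) (ZMod (3*p))).map fp := by rw [h]
    rw [matE_pow_map, hfpk, matE_two_pow] at h'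
    have h1 : ((1 : Matrix (Fin 2) (Fin 2) (ZMod (3*p))).map fp) = 1 := by
      rw [← RingHom.mapMatrix_apply, map_one]
    rw [h1] at h'
    have := congrFun (congrFun h' 1) 0
    simp [Matrix.one_apply] at this
    exact (ZMod.natCast_eq_zero_iff m p).mp this
  have hmodpneg : ∀ m : ℕ, matE k ^ m ≠ -1 := by
    intro m h
    have h' : (matE k ^ m).map fp = (-1 : Matrix (Fin 2) (Fin 2) (ZMod (3*p))).map fp := by rw [h]
    rw [matE_pow_map, hfpk, matE_two_pow] at h'
    have h1 : ((-1 : Matrix (Fin 2) (Fin 2) (ZMod (3*p))).map fp) = -1 := by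
      rw [← RingHom.mapMatrix_apply, map_neg, map_one]
    rw [h1] at h'
    have e10 := congrFun (congrFun h' 1) 0
    have e00 := congrFun (congrFun h' 0) 0
    simp [Matrix.one_apply] at e10 e00
    rw [e10, zero_add] at e00
    have h2 : (2 : ZMod p) = 0 := by linear_combination e00
    have : (p : ℕ) ∣ 2 := by
      have := (ZMod.natCast_eq_zero_iff 2 p).mp (by exact_mod_cast h2)
      exact this
    have := (Nat.prime_dvd_prime_iff_eq hp Nat.prime_two).mp this
    exact hp2 this
  -- mod 3 analysis
  have hmod3 : ∀ m : ℕ, matE k ^ m = 1 → 4 ∣ m := by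
    intro m h
    have h' : (matE k ^ m).map f3 = (1 : Matrix (Fin 2) (Fin 2) (ZMod (3*p))).map f3 := by rw [h]
    rw [matE_pow_map, hf3k] at h'
    have h1 : ((1 : Matrix (Fin 2) (Fin 2) (ZMod (3*p))).map f3) = 1 := by
      rw [← RingHom.mapMatrix_apply, map_one]
    rw [h1] at h'
    exact (matE_zero_pow_eq_one_iff m).mp h'
  -- injectivity via CRT
  have hcop : Nat.Coprime 3 p := by
    rw [Nat.coprime_primes Nat.prime_three hp]
    omega
  have hinj : ∀ x y : ZMod (3 * p), f3 x = f3 y → fp x = fp y → x = y := by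
    intro x y h3 hpeq
    let e := ZMod.chineseRemainder hcop
    have hfst : (RingHom.fst (ZMod 3) (ZMod p)).comp e.toRingHom = f3 := RingHom.ext_zmod _ _
    have hsnd : (RingHom.snd (ZMod 3) (ZMod p)).comp e.toRingHom = fp := RingHom.ext_zmod _ _
    have : e x = e y := by
      apply Prod.ext
      · have := congrArg (fun f => f x) hfst
        have h2 := congrArg (fun f => f y) hfst
        simp at this h2
        rw [this, h2, h3]
      · have := congrArg (fun f => f x) hsnd
        have h2 := congrArg (fun f => f y) hsnd
        simp at this h2
        rw [this, h2, hpeq]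
    exact e.injective this
  -- existence
  have hex : matE k ^ (4 * p) = 1 := by
    ext i j
    apply hinj
    · have h3 : (matE k ^ (4*p)).map f3 = (1 : Matrix (Fin 2) (Fin 2) (ZMod (3*p))).map f3 := by
        rw [matE_pow_map, hf3k]
        have h1 : ((1 : Matrix (Fin 2) (Fin 2) (ZMod (3*p))).map f3) = 1 := by
          rw [← RingHom.mapMatrix_apply, map_one]
        rw [h1, (matE_zero_pow_eq_one_iff (4*p)).mpr ⟨p, rfl⟩]
      exact congrFun (congrFun h3 i) j
    · have h3 : (matE k ^ (4*p)).map fp = (1 : Matrix (Fin 2) (Fin 2) (ZMod (3*p))).map fp := by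
        rw [matE_pow_map, hfpk, matE_two_pow]
        have h1 : ((1 : Matrix (Fin 2) (Fin 2) (ZMod (3*p))).map fp) = 1 := by
          rw [← RingHom.mapMatrix_apply, map_one]
        rw [h1]
        have hz : ((4 * p : ℕ) : ZMod p) = 0 := by
          exact (ZMod.natCast_eq_zero_iff _ p).mpr ⟨4, by ring⟩
        rw [hz, Matrix.one_fin_two]
        norm_num
      exact congrFun (congrFun h3 i) j
  refine ⟨by positivity, Or.inl hex, ?_⟩
  intro m hm hsol
  have h1 : matE k ^ m = 1 := by
    rcases hsol with h | h
    · exact h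
    · exact absurd h (hmodpneg m)
  have hd4 : 4 ∣ m := hmod3 m h1
  have hdp : p ∣ m := hmodp m h1
  have hcop4 : Nat.Coprime 4 p := by
    have h2p : Nat.Coprime 2 p := (Nat.coprime_primes Nat.prime_two hp).mpr (fun h => hp2 h.symm)
    have h4 := Nat.Coprime.pow_left 2 h2p
    norm_num at h4
    exact h4
  have : 4 * p ∣ m := hcop4.mul_dvd_of_dvd_of_dvd hd4 hdp
  exact Nat.le_of_dvd hm this
end

section
/- Let p be an odd prime with p ≡ 2 (mod 3), let N = 3p, and let k = p - 2. Then the size of the k̄-monomial minimal solution modulo N is exactly 4p. -/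
/-- Closed form for powers of `matE (-2)` over `ZMod p`. -/
lemma matE_neg_two_pow (p : ℕ) (m : ℕ) :
    matE (-2 : ZMod p) ^ m =
      !![(-1 : ZMod p) ^ m * (1 + (m : ZMod p)), (-1 : ZMod p) ^ m * (m : ZMod p);
         (-1 : ZMod p) ^ m * (-(m : ZMod p)), (-1 : ZMod p) ^ m * (1 - (m : ZMod p))] := by
  induction m with
  | zero => simp [Matrix.one_fin_two]
  | succ m ih =>
      rw [pow_succ, ih, matE, Matrix.mul_fin_two]
      ext i j
      fin_cases i <;> fin_cases j <;>
        · simp only [Matrix.cons_val', Matrix.cons_val_zero, Matrix.cons_val_one,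
            Matrix.head_cons, Matrix.empty_val', Matrix.cons_val_fin_one, Matrix.head_fin_const,
            Fin.isValue, Matrix.of_apply, Nat.cast_succ]
          push_cast
          ring_nf

lemma matE3_pow_four : matE (0 : ZMod 3) ^ 4 = 1 := by decide

lemma matE3_pow_mod (m : ℕ) : matE (0 : ZMod 3) ^ m = matE (0 : ZMod 3) ^ (m % 4) := by
  conv_lhs => rw [← Nat.div_add_mod m 4]
  rw [pow_add, pow_mul, matE3_pow_four, one_pow, one_mul]

lemma matE3_eq_one {m : ℕ} (h : matE (0 : ZMod 3) ^ m = 1) : m % 4 = 0 := by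
  rw [matE3_pow_mod] at h
  have h4 : m % 4 < 4 := Nat.mod_lt m (by norm_num)
  interval_cases h' : (m % 4) <;> revert h <;> decide

lemma matE3_eq_neg_one {m : ℕ} (h : matE (0 : ZMod 3) ^ m = -1) : m % 4 = 2 := by
  rw [matE3_pow_mod] at h
  have h4 : m % 4 < 4 := Nat.mod_lt m (by norm_num)
  interval_cases h' : (m % 4) <;> revert h <;> decide

lemma matEp_eq_one {p : ℕ} (hp2 : 2 < p) {m : ℕ}
    (h : matE (-2 : ZMod p) ^ m = 1) : p ∣ m ∧ m % 2 = 0 := by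
  haveI : Fact (2 < p) := ⟨hp2⟩
  rw [matE_neg_two_pow, Matrix.one_fin_two] at h
  have h01 : (-1 : ZMod p) ^ m * (m : ZMod p) = 0 := by
    simpa using congrFun (congrFun h 0) 1
  have h00 : (-1 : ZMod p) ^ m * (1 + (m : ZMod p)) = 1 := by
    simpa using congrFun (congrFun h 0) 0
  rcases Nat.even_or_odd m with he | ho
  · rw [he.neg_one_pow, one_mul] at h01
    exact ⟨(ZMod.natCast_eq_zero_iff m p).mp h01, Nat.even_iff.mp he⟩
  · exfalso
    rw [ho.neg_one_pow, neg_one_mul, neg_eq_zero] at h01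
    rw [ho.neg_one_pow, h01, add_zero, neg_one_mul] at h00
    exact CharP.neg_one_ne_one (ZMod p) p h00

lemma matEp_eq_neg_one {p : ℕ} (hp2 : 2 < p) {m : ℕ}
    (h : matE (-2 : ZMod p) ^ m = -1) : p ∣ m ∧ m % 2 = 1 := by
  haveI : Fact (2 < p) := ⟨hp2⟩
  rw [matE_neg_two_pow, Matrix.one_fin_two] at h
  have h01 : (-1 : ZMod p) ^ m * (m : ZMod p) = 0 := by
    simpa using congrFun (congrFun h 0) 1
  have h00 : (-1 : ZMod p) ^ m * (1 + (m : ZMod p)) = -1 := by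
    simpa using congrFun (congrFun h 0) 0
  rcases Nat.even_or_odd m with he | ho
  · exfalso
    rw [he.neg_one_pow, one_mul] at h01
    rw [he.neg_one_pow, h01, add_zero, one_mul] at h00
    exact CharP.neg_one_ne_one (ZMod p) p h00.symm
  · rw [ho.neg_one_pow, neg_one_mul, neg_eq_zero] at h01
    exact ⟨(ZMod.natCast_eq_zero_iff m p).mp h01, Nat.odd_iff.mp ho⟩

theorem stmt14 (p : ℕ) (hp : p.Prime) (hodd : Odd p) (hp3 : p % 3 = 2) :
    minMonSize (((p : ℤ) - 2 : ℤ) : ZMod (3 * p)) (4 * p) := by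
  have hp0 : 0 < p := hp.pos
  haveI : NeZero p := ⟨hp0.ne'⟩
  haveI : NeZero (3 * p) := ⟨by positivity⟩
  have hp2 : 2 < p := by
    rcases hodd with ⟨t, ht⟩
    rcases Nat.lt_or_ge p 3 with h | h
    · interval_cases p <;> omega
    · omega
  have hcop : Nat.Coprime 3 p :=
    (Nat.coprime_primes Nat.prime_three hp).mpr (by omega)
  set f3 : ZMod (3 * p) →+* ZMod 3 := ZMod.castHom ⟨p, rfl⟩ (ZMod 3) with hf3
  set fp : ZMod (3 * p) →+* ZMod p := ZMod.castHom ⟨3, mul_comm 3 p⟩ (ZMod p) with hfp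
  set k : ZMod (3 * p) := (((p : ℤ) - 2 : ℤ) : ZMod (3 * p)) with hk
  have hf3k : f3 k = 0 := by
    rw [hk, map_intCast]
    push_cast
    rw [← ZMod.natCast_mod p 3, hp3]
    decide
  have hfpk : fp k = -2 := by
    rw [hk, map_intCast]
    push_cast
    rw [ZMod.natCast_self]
    ring
  have hmap3 : ∀ m : ℕ, f3.mapMatrix (matE k ^ m) = matE (0 : ZMod 3) ^ m := by
    intro m
    rw [map_pow]
    congr 1
    rw [← hf3k]
    ext i j
    fin_cases i <;> fin_cases j <;>
      simp [matE, RingHom.mapMatrix_apply, Matrix.map_apply]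
  have hmapp : ∀ m : ℕ, fp.mapMatrix (matE k ^ m) = matE (-2 : ZMod p) ^ m := by
    intro m
    rw [map_pow]
    congr 1
    rw [← hfpk]
    ext i j
    fin_cases i <;> fin_cases j <;>
      simp [matE, RingHom.mapMatrix_apply, Matrix.map_apply]
  have hinj : ∀ x : ZMod (3 * p), f3 x = 0 → fp x = 0 → x = 0 := by
    intro x h3 hpx
    have hx : ((x.val : ℕ) : ZMod (3 * p)) = x := ZMod.natCast_zmod_val x
    rw [← hx] at h3 hpx ⊢
    rw [map_natCast] at h3 hpx
    have d3 : 3 ∣ x.val := (ZMod.natCast_eq_zero_iff _ _).mp h3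
    have dp : p ∣ x.val := (ZMod.natCast_eq_zero_iff _ _).mp hpx
    exact (ZMod.natCast_eq_zero_iff _ _).mpr (hcop.mul_dvd_of_dvd_of_dvd d3 dp)
  have hMeq : ∀ M M' : Matrix (Fin 2) (Fin 2) (ZMod (3 * p)),
      f3.mapMatrix M = f3.mapMatrix M' → fp.mapMatrix M = fp.mapMatrix M' → M = M' := by
    intro M M' h3 hpm
    ext i j
    have e3 : f3 (M i j - M' i j) = 0 := by
      have := congrFun (congrFun h3 i) j
      simp only [RingHom.mapMatrix_apply, Matrix.map_apply] at this
      rw [map_sub, this, sub_self]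
    have ep : fp (M i j - M' i j) = 0 := by
      have := congrFun (congrFun hpm i) j
      simp only [RingHom.mapMatrix_apply, Matrix.map_apply] at this
      rw [map_sub, this, sub_self]
    exact sub_eq_zero.mp (hinj _ e3 ep)
  refine ⟨by positivity, ?_, ?_⟩
  · left
    apply hMeq
    · rw [hmap3, map_one, matE3_pow_mod]
      have h4 : 4 * p % 4 = 0 := by omega
      rw [h4, pow_zero]
    · rw [hmapp, map_one, matE_neg_two_pow]
      have h1 : ((4 * p : ℕ) : ZMod p) = 0 := by
        push_cast [ZMod.natCast_self]
        ring
      have h2 : (-1 : ZMod p) ^ (4 * p) = 1 := Even.neg_one_pow ⟨2 * p, by ring⟩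
      rw [h1, h2, Matrix.one_fin_two]
      norm_num
  · intro m hm h
    rcases h with h | h
    · have h3 : matE (0 : ZMod 3) ^ m = 1 := by rw [← hmap3 m, h, map_one]
      have hpm : matE (-2 : ZMod p) ^ m = 1 := by rw [← hmapp m, h, map_one]
      have d4 : 4 ∣ m := Nat.dvd_of_mod_eq_zero (matE3_eq_one h3)
      obtain ⟨dp, -⟩ := matEp_eq_one hp2 hpm
      have htwo : Nat.Coprime 2 p := (Nat.coprime_primes Nat.prime_two hp).mpr (by omega)
      have hcop4 : Nat.Coprime 4 p := by
        have := htwo.pow_left 2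
        norm_num at this
        exact this
      exact Nat.le_of_dvd hm (hcop4.mul_dvd_of_dvd_of_dvd d4 dp)
    · have h3 : matE (0 : ZMod 3) ^ m = -1 := by rw [← hmap3 m, h, map_neg, map_one]
      have hpm : matE (-2 : ZMod p) ^ m = -1 := by rw [← hmapp m, h, map_neg, map_one]
      have e2 := matE3_eq_neg_one h3
      obtain ⟨-, e1⟩ := matEp_eq_neg_one hp2 hpm
      omega
end

section
/- There is no constant K ≥ 1 such that for every N ≥ 2 all irreducible solutions of the equation M_n(a₁,...,aₙ) = ±Id over ℤ/Nℤ have size at most N + K. -/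
/- ### auxiliary material -/

def chF (k : ℤ) : ℕ → ℤ
  | 0 => 0
  | 1 => 1
  | n+2 => k * chF k (n+1) - chF k n

def matEi {N : ℕ} (a : ZMod N) : Matrix (Fin 2) (Fin 2) (ZMod N) := !![0, 1; -1, a]

lemma matEi_mul_matE {N : ℕ} (a : ZMod N) : matEi a * matE a = 1 := by
  simp [matEi, matE, Matrix.mul_fin_two, Matrix.one_fin_two]

lemma matE_mul_matEi {N : ℕ} (a : ZMod N) : matE a * matEi a = 1 := by
  simp [matEi, matE, Matrix.mul_fin_two, Matrix.one_fin_two]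

lemma matE_pow {N : ℕ} (k : ℤ) (j : ℕ) :
    (matE (k : ZMod N)) ^ (j+1) =
      !![((chF k (j+2) : ℤ) : ZMod N), -((chF k (j+1) : ℤ) : ZMod N);
         ((chF k (j+1) : ℤ) : ZMod N), -((chF k j : ℤ) : ZMod N)] := by
  induction j with
  | zero => simp [matE, chF]
  | succ n ih =>
      rw [pow_succ, ih]
      simp only [matE, Matrix.mul_fin_two, chF]
      congr 1 <;> push_cast <;> ring

lemma Mlist_cons {N : ℕ} (x : ZMod N) (t : List (ZMod N)) :
    Mlist (x :: t) = Mlist t * matE x := by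
  simp [Mlist]

lemma Mlist_concat {N : ℕ} (y : ZMod N) (t : List (ZMod N)) :
    Mlist (t ++ [y]) = matE y * Mlist t := by
  simp [Mlist]

lemma Mlist_replicate {N : ℕ} (k : ZMod N) (j : ℕ) :
    Mlist (List.replicate j k) = matE k ^ j := by
  induction j with
  | zero => simp [Mlist]
  | succ n ih => rw [List.replicate_succ, Mlist_cons, ih, pow_succ]

lemma chF_lin {M : ℕ} {k : ℤ} (h : (k : ZMod M) = 2) :
    ∀ i : ℕ, ((chF k i : ℤ) : ZMod M) = (i : ZMod M) := by
  have key : ∀ i : ℕ, ((chF k i : ℤ) : ZMod M) = (i : ZMod M) ∧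
      ((chF k (i+1) : ℤ) : ZMod M) = ((i+1 : ℕ) : ZMod M) := by
    intro i
    induction i with
    | zero => simp [chF]
    | succ n ih =>
        refine ⟨ih.2, ?_⟩
        show ((chF k (n+2) : ℤ) : ZMod M) = _
        rw [chF]
        push_cast
        rw [ih.1, ih.2, h]
        push_cast
        ring
  exact fun i => (key i).1

lemma chF_mod3 {k : ℤ} (h : (k : ZMod 3) = 0) :
    ∀ i : ℕ, ((chF k (2*i) : ℤ) : ZMod 3) = 0 ∧ ((chF k (2*i+1) : ℤ) : ZMod 3) = (-1)^i := by
  intro i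
  induction i with
  | zero => simp [chF]
  | succ n ih =>
      have h1 : ((chF k (2*n+2) : ℤ) : ZMod 3) = 0 := by
        rw [chF]; push_cast; rw [ih.1, ih.2, h]; ring
      constructor
      · show ((chF k (2*n+2) : ℤ) : ZMod 3) = 0
        exact h1
      · show ((chF k (2*n+2+1) : ℤ) : ZMod 3) = _
        rw [chF]
        push_cast
        rw [h1, ih.2, h]
        ring

lemma crt_combine {a b n : ℕ} (hn : n = a * b) (hab : Nat.Coprime a b) {x c : ℤ}
    (ha : (x : ZMod a) = (c : ZMod a)) (hb : (x : ZMod b) = (c : ZMod b)) :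
    (x : ZMod n) = (c : ZMod n) := by
  subst hn
  have ha' : (a : ℤ) ∣ x - c := by
    rwa [← ZMod.intCast_zmod_eq_zero_iff_dvd, Int.cast_sub, sub_eq_zero]
  have hb' : (b : ℤ) ∣ x - c := by
    rwa [← ZMod.intCast_zmod_eq_zero_iff_dvd, Int.cast_sub, sub_eq_zero]
  have hco : IsCoprime (a : ℤ) (b : ℤ) := Nat.isCoprime_iff_coprime.mpr hab
  have : ((a*b : ℕ) : ℤ) ∣ x - c := by push_cast; exact hco.mul_dvd ha' hb'
  rw [← sub_eq_zero, ← Int.cast_sub, ZMod.intCast_zmod_eq_zero_iff_dvd]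
  exact this

theorem stmt15 :
    ¬ ∃ K : ℕ, 1 ≤ K ∧ ∀ N : ℕ, 2 ≤ N → ∀ c : List (ZMod N),
      IsSolL c → 3 ≤ c.length → ¬ Reducible c → c.length ≤ N + K := by
  rintro ⟨K, hK1, hbound⟩
  obtain ⟨M, hM⟩ : ∃ M : ℕ, M = 12*K + 5 := ⟨_, rfl⟩
  obtain ⟨N, hN⟩ : ∃ N : ℕ, N = 3 * M := ⟨_, rfl⟩
  haveI : NeZero M := ⟨by omega⟩
  haveI : NeZero N := ⟨by omega⟩
  obtain ⟨k₀, hk₀⟩ : ∃ k₀ : ℤ, k₀ = 24*K + 12 := ⟨_, rfl⟩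
  -- basic congruences of k₀
  have hk3 : (k₀ : ZMod 3) = 0 := by
    rw [ZMod.intCast_zmod_eq_zero_iff_dvd]
    exact ⟨8*K + 4, by rw [hk₀]; push_cast; ring⟩
  have hkM : (k₀ : ZMod M) = 2 := by
    have h2 : ((k₀ - 2 : ℤ) : ZMod M) = 0 := by
      rw [ZMod.intCast_zmod_eq_zero_iff_dvd]
      exact ⟨2, by rw [hk₀, hM]; push_cast; ring⟩
    push_cast at h2
    linear_combination h2
  have hco3M : Nat.Coprime 3 M := (Nat.prime_three.coprime_iff_not_dvd).mpr (by omega)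
  have hco2M : Nat.Coprime 2 M := (Nat.prime_two.coprime_iff_not_dvd).mpr (by omega)
  have hco4M : Nat.Coprime 4 M := by
    have : (4 : ℕ) = 2 * 2 := by norm_num
    rw [this]; exact Nat.Coprime.mul hco2M hco2M
  -- the constant tuple
  obtain ⟨kk, hkk⟩ : ∃ kk : ZMod N, kk = ((k₀ : ℤ) : ZMod N) := ⟨_, rfl⟩
  obtain ⟨c, hc⟩ : ∃ c : List (ZMod N), c = List.replicate (4*M) kk := ⟨_, rfl⟩
  -- values of chF mod 3 and mod M at the relevant indices, combined mod N
  have chFN : ∀ i : ℕ, ((chF k₀ i : ℤ) : ZMod N) = ((chF k₀ i : ℤ) : ZMod N) := fun _ => rfl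
  have hmod3 := chF_mod3 hk3
  have hmodM := chF_lin hkM
  have hF_4M : ((chF k₀ (4*M) : ℤ) : ZMod N) = ((0 : ℤ) : ZMod N) := by
    apply crt_combine hN hco3M
    · have := (hmod3 (2*M)).1
      rw [show 2*(2*M) = 4*M by ring] at this
      simpa using this
    · have := hmodM (4*M)
      rw [this]
      push_cast
      rw [ZMod.natCast_self]
      push_cast
      ring
  have hF_4M1 : ((chF k₀ (4*M+1) : ℤ) : ZMod N) = ((1 : ℤ) : ZMod N) := by
    apply crt_combine hN hco3M
    · have := (hmod3 (2*M)).2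
      rw [show 2*(2*M)+1 = 4*M+1 by ring] at this
      rw [this]
      have : ((-1 : ZMod 3))^(2*M) = 1 := Even.neg_one_pow ⟨M, by ring⟩
      rw [this]; simp
    · have := hmodM (4*M+1)
      rw [this]
      push_cast
      rw [ZMod.natCast_self]
      push_cast
      ring
  have hF_4Mm1 : ((chF k₀ (4*M-1) : ℤ) : ZMod N) = ((-1 : ℤ) : ZMod N) := by
    have hidx : 4*M - 1 = 2*(2*M-1)+1 := by omega
    apply crt_combine hN hco3M
    · have := (hmod3 (2*M-1)).2
      rw [← hidx] at this
      rw [this]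
      have : ((-1 : ZMod 3))^(2*M-1) = -1 := Odd.neg_one_pow ⟨M-1, by omega⟩
      rw [this]; simp
    · have := hmodM (4*M-1)
      rw [this]
      have : ((4*M-1 : ℕ) : ZMod M) = 4*(M : ZMod M) - 1 := by
        push_cast [Nat.cast_sub (by omega : 1 ≤ 4*M)]
        ring
      rw [this, ZMod.natCast_self]
      push_cast
      ring
  -- c is a solution
  have hpow : matE kk ^ (4*M) = 1 := by
    obtain ⟨j, hj⟩ : ∃ j, 4*M = j + 1 := ⟨4*M - 1, by omega⟩
    rw [hkk, hj, matE_pow]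
    have e2 : j + 2 = 4*M + 1 := by omega
    have e1 : j + 1 = 4*M := by omega
    have e0 : j = 4*M - 1 := by omega
    rw [e2, e1, e0, hF_4M, hF_4M1, hF_4Mm1]
    norm_num [← Matrix.one_fin_two]
  have hsol : IsSolL c := by
    left
    rw [hc, Mlist_replicate, hpow]
  have hlen : c.length = 4*M := by simp [hc]
  -- irreducibility
  have hirr : ¬ Reducible c := by
    rintro ⟨a, b, ha3, hb3, hbsol, hequiv⟩
    -- oplus a b is the constant list
    have hop : oplus a b = List.replicate (4*M) kk := by
      have hrep : ∀ (i : ℕ),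
          (List.replicate (4*M) kk).rotate i = List.replicate (4*M) kk := by
        intro i
        have hmem : ∀ z ∈ (List.replicate (4*M) kk).rotate i, z = kk :=
          fun z hz => List.eq_of_mem_replicate (List.mem_rotate.mp hz)
        have h2 := List.eq_replicate_of_mem hmem
        rwa [List.length_rotate, List.length_replicate] at h2
      rcases hequiv with ⟨i, hi⟩ | ⟨i, hi⟩
      · rw [hi, hc, hrep i]
      · rw [hi, hc, List.reverse_replicate, hrep i]
    -- facts about b
    have hlenop : (oplus a b).length = 4*M := by rw [hop, List.length_replicate]
    have hlenop' : (oplus a b).length = a.length + b.length - 2 := by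
      simp [oplus]
      omega
    have hbmem : ∀ z ∈ b.tail.dropLast, z = kk := by
      intro z hz
      apply List.eq_of_mem_replicate (n := 4*M)
      rw [← hop]
      simp [oplus]
      tauto
    have hbne : b ≠ [] := by
      intro h; rw [h] at hb3; simp at hb3
    have hbtne : b.tail ≠ [] := by
      intro h
      have := congrArg List.length h
      simp at this
      omega
    set x := b.head hbne with hx
    set y := b.tail.getLast hbtne with hy
    have hbdec : b = x :: (b.tail.dropLast ++ [y]) := by
      rw [hx, hy]
      rw [List.dropLast_append_getLast hbtne]
      exact (List.cons_head_tail hbne).symm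
    have hbmid : b.tail.dropLast = List.replicate (b.length - 2) kk := by
      have h2 := List.eq_replicate_of_mem hbmem
      rw [h2]
      congr 1
      simp
      omega
    -- the matrix of b
    have hMb : Mlist b = matE y * matE kk ^ (b.length - 2) * matE x := by
      conv_lhs => rw [hbdec]
      rw [Mlist_cons, Mlist_concat, hbmid, Mlist_replicate]
    -- extract the (0,0) entry equation
    set A := matE kk ^ (b.length - 2) with hA
    have hAval : ∀ d : Matrix (Fin 2) (Fin 2) (ZMod N), Mlist b = d →
        A = matEi y * d * matEi x := by
      intro d hd
      rw [hMb] at hd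
      calc A = matEi y * (matE y * (A * (matE x * matEi x))) := by
                rw [matE_mul_matEi, mul_one, ← mul_assoc, matEi_mul_matE, one_mul]
        _ = matEi y * (matE y * A * matE x) * matEi x := by
                simp only [mul_assoc]
        _ = matEi y * d * matEi x := by rw [hd]
    -- chF value at n := b.length - 1 is ±1 mod N
    have hrange : 2 ≤ b.length - 1 ∧ b.length - 1 ≤ 4*M - 2 := by
      constructor
      · omega
      · omega
    obtain ⟨j, hj⟩ : ∃ j, b.length - 2 = j + 1 := ⟨b.length - 3, by omega⟩
    have hA00 : A 0 0 = ((chF k₀ (b.length - 1) : ℤ) : ZMod N) := by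
      rw [hA, hkk, hj, matE_pow]
      rw [show j + 2 = b.length - 1 by omega]
      simp
    set n := b.length - 1 with hn
    have hpm : ((chF k₀ n : ℤ) : ZMod N) = ((1:ℤ) : ZMod N) ∨
               ((chF k₀ n : ℤ) : ZMod N) = ((-1:ℤ) : ZMod N) := by
      rcases hbsol with hd | hd
      · right
        have := hAval 1 hd
        rw [mul_one] at this
        have h00 := congrFun (congrFun this 0) 0
        rw [hA00] at h00
        rw [h00]
        simp [matEi, Matrix.mul_fin_two]
      · left
        have := hAval (-1) hd
        have h00 := congrFun (congrFun this 0) 0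
        rw [hA00] at h00
        rw [h00]
        simp [matEi, Matrix.mul_fin_two]
    -- push down to ZMod 3 and ZMod M
    have hdvd3 : (3:ℕ) ∣ N := ⟨M, hN⟩
    have hdvdM : (M:ℕ) ∣ N := ⟨3, by rw [hN]; ring⟩
    have push3 : ∀ d : ℤ, ((chF k₀ n : ℤ) : ZMod N) = ((d:ℤ) : ZMod N) →
        ((chF k₀ n : ℤ) : ZMod 3) = ((d:ℤ) : ZMod 3) := by
      intro d h
      have := congrArg (ZMod.castHom hdvd3 (ZMod 3)) h
      simpa using this
    have pushM : ∀ d : ℤ, ((chF k₀ n : ℤ) : ZMod N) = ((d:ℤ) : ZMod N) →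
        ((chF k₀ n : ℤ) : ZMod M) = ((d:ℤ) : ZMod M) := by
      intro d h
      have := congrArg (ZMod.castHom hdvdM (ZMod M)) h
      simpa using this
    -- parity analysis mod 3 : n ≡ 1 mod 4 (for +1) or n ≡ 3 mod 4 (for -1)
    have hmod4 : ∀ d : ℤ, (d = 1 ∨ d = -1) → ((chF k₀ n : ℤ) : ZMod 3) = ((d:ℤ) : ZMod 3) →
        (d = 1 ∧ n % 4 = 1) ∨ (d = -1 ∧ n % 4 = 3) := by
      intro d hd h3
      rcases Nat.even_or_odd n with ⟨i, hi⟩ | ⟨i, hi⟩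
      · exfalso
        rw [show n = 2*i by omega] at h3
        rw [(hmod3 i).1] at h3
        rcases hd with rfl | rfl <;> revert h3 <;> decide
      · rw [show n = 2*i+1 by omega] at h3
        rw [(hmod3 i).2] at h3
        rcases Nat.even_or_odd i with hie | hio
        · have : ((-1 : ZMod 3))^i = 1 := Even.neg_one_pow hie
          rw [this] at h3
          rcases hd with rfl | rfl
          · left; exact ⟨rfl, by obtain ⟨w, hw⟩ := hie; omega⟩
          · exfalso; revert h3; decide
        · have : ((-1 : ZMod 3))^i = -1 := Odd.neg_one_pow hio
          rw [this] at h3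
          rcases hd with rfl | rfl
          · exfalso; revert h3; decide
          · right; exact ⟨rfl, by obtain ⟨w, hw⟩ := hio; omega⟩
    -- mod M : n ≡ d mod M
    have hmodMn : ∀ d : ℤ, ((chF k₀ n : ℤ) : ZMod M) = ((d:ℤ) : ZMod M) →
        ((n : ℕ) : ZMod M) = ((d:ℤ) : ZMod M) := by
      intro d h
      rw [hmodM n] at h
      exact h
    -- derive contradiction
    rcases hpm with h | h
    · obtain ⟨_, h4⟩ := (hmod4 1 (Or.inl rfl) (push3 1 h)).resolve_right (by simp)
      have hM1 : ((n : ℕ) : ZMod M) = 1 := by simpa using hmodMn 1 (pushM 1 h)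
      have : (M:ℕ) ∣ n - 1 := by
        have hz : ((n - 1 : ℕ) : ZMod M) = 0 := by
          push_cast [Nat.cast_sub (by omega : 1 ≤ n)]
          rw [hM1]
          ring
        exact (ZMod.natCast_eq_zero_iff _ _).mp hz
      have h4' : (4:ℕ) ∣ n - 1 := by omega
      have := Nat.Coprime.mul_dvd_of_dvd_of_dvd hco4M h4' this
      have := Nat.le_of_dvd (by omega) this
      omega
    · obtain ⟨_, h4⟩ := (hmod4 (-1) (Or.inr rfl) (push3 (-1) h)).resolve_left (by simp)
      have hM1 : ((n : ℕ) : ZMod M) = -1 := by simpa using hmodMn (-1) (pushM (-1) h)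
      have : (M:ℕ) ∣ n + 1 := by
        have : ((n + 1 : ℕ) : ZMod M) = 0 := by
          push_cast
          rw [hM1]
          ring
        exact (ZMod.natCast_eq_zero_iff _ _).mp this
      have h4' : (4:ℕ) ∣ n + 1 := by omega
      have := Nat.Coprime.mul_dvd_of_dvd_of_dvd hco4M h4' this
      have := Nat.le_of_dvd (by omega) this
      omega
  -- conclude
  have := hbound N (by omega) c hsol (by omega) hirr
  rw [hlen] at this
  omega
end

section
/- If N ≥ 8 is divisible by 8, then for every integer k the size of the k̄-monomial minimal solution modulo N is at most N. -/
set_option linter.unnecessarySeqFocus false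
set_option linter.unreachableTactic false
set_option linter.unusedTactic false

section Aux

lemma ker_cast {n p : ℕ} (hn : n ≠ 0) (hp : p ≠ 0) (x : ZMod (n*p))
    (hx : ZMod.castHom (dvd_mul_right n p) (ZMod n) x = 0) :
    ∃ y : ZMod (n*p), x = (n : ZMod (n*p)) * y := by
  haveI : NeZero (n*p) := ⟨mul_ne_zero hn hp⟩
  obtain ⟨a, rfl⟩ := ZMod.natCast_zmod_surjective x
  rw [map_natCast, ZMod.natCast_eq_zero_iff] at hx
  obtain ⟨c, rfl⟩ := hx
  exact ⟨(c : ZMod (n*p)), by push_cast; ring⟩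

lemma lift_pow {n p : ℕ} (hn : n ≠ 0) (hp : p ≠ 0) (hdvd : p ∣ n)
    (A : Matrix (Fin 2) (Fin 2) (ZMod (n*p))) (m : ℕ)
    (h : ((ZMod.castHom (dvd_mul_right n p) (ZMod n)).mapMatrix A)^m = 1) :
    A^(m*p) = 1 := by
  set f := ZMod.castHom (dvd_mul_right n p) (ZMod n)
  set M := A^m with hM
  have hcast : f.mapMatrix M = 1 := by rw [hM, map_pow, h]
  set t := M - 1 with ht
  have hent : ∀ i j, ∃ y, t i j = (n : ZMod (n*p)) * y := by
    intro i j
    apply ker_cast hn hp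
    have : f.mapMatrix t = 0 := by rw [ht, map_sub, hcast, map_one, sub_self]
    have := congrFun (congrFun this i) j
    exact this
  have hn2 : (n : ZMod (n*p)) * (n : ZMod (n*p)) = 0 := by
    rw [← Nat.cast_mul, ZMod.natCast_eq_zero_iff]
    exact mul_dvd_mul_left n hdvd
  have hnp : (n : ZMod (n*p)) * (p : ZMod (n*p)) = 0 := by
    rw [← Nat.cast_mul, ZMod.natCast_eq_zero_iff]
  have htt : t * t = 0 := by
    ext i j
    rw [Matrix.mul_apply]
    apply Finset.sum_eq_zero
    intro l _
    obtain ⟨y, hy⟩ := hent i l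
    obtain ⟨z, hz⟩ := hent l j
    rw [hy, hz]
    rw [mul_mul_mul_comm, hn2, zero_mul]
  have hpt : p • t = 0 := by
    ext i j
    obtain ⟨y, hy⟩ := hent i j
    simp only [Matrix.smul_apply, hy, Matrix.zero_apply, nsmul_eq_mul]
    rw [← mul_assoc, mul_comm ((p:ZMod (n*p))), hnp, zero_mul]
  have hMj : ∀ j : ℕ, M^j = 1 + j • t := by
    intro j
    induction j with
    | zero => simp
    | succ j ih =>
      have hM1 : M = 1 + t := by rw [ht]; abel
      rw [pow_succ, ih, hM1]
      rw [add_mul, one_mul, mul_add, mul_one, smul_mul_assoc, htt, smul_zero, add_zero,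
        succ_nsmul, add_assoc, add_comm t]
  rw [pow_mul, ← hM, hMj p, hpt, add_zero]

lemma base8 : ∀ k : ZMod 8, (matE k)^6 = 1 ∨ (matE k)^8 = 1 := by decide

lemma hEinv {p : ℕ} (k : ZMod p) :
    matE k * (k • 1 - matE k) = 1 ∧ (k • 1 - matE k) * matE k = 1 := by
  constructor <;> ext i j <;>
  fin_cases i <;> fin_cases j <;>
    simp [matE, Matrix.mul_apply, Fin.sum_univ_two, Matrix.one_apply] <;> ring

lemma hs2 {p : ℕ} {k c : ZMod p} (hk : k = 2 * c) :
    (matE k - c • 1) * (matE k - c • 1) = (c * c - 1) • (1 : Matrix (Fin 2) (Fin 2) (ZMod p)) := by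
  subst hk
  ext i j
  fin_cases i <;> fin_cases j <;>
    simp [matE, Matrix.mul_apply, Fin.sum_univ_two, Matrix.one_apply] <;> ring

lemma field_case {p : ℕ} [Fact p.Prime] (hp2 : p ≠ 2) (k : ZMod p) :
    ∃ f, 0 < f ∧ 2 ∣ f ∧ f ≤ 2 * p ∧ (matE k) ^ f = 1 := by
  have hp := (Fact.out : p.Prime)
  obtain ⟨h, hph⟩ : ∃ h, p = 2 * h + 1 := (hp.odd_of_ne_two hp2)
  have hp3 : 3 ≤ p := hp.two_le.lt_of_ne (Ne.symm hp2)
  have h1 : 1 ≤ h := by omega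
  have two_ne : (2 : ZMod p) ≠ 0 := by
    intro hh
    have := (ZMod.natCast_eq_zero_iff 2 p).mp (by exact_mod_cast hh)
    exact hp2 ((Nat.prime_dvd_prime_iff_eq hp Nat.prime_two).mp this)
  set c : ZMod p := k * 2⁻¹ with hc
  have hk : k = 2 * c := by
    rw [hc, mul_comm 2, mul_assoc, inv_mul_cancel₀ two_ne, mul_one]
  set E := matE k with hE
  set s := E - c • (1 : Matrix (Fin 2) (Fin 2) (ZMod p)) with hs
  set d := c * c - 1 with hd
  have hss : s * s = d • 1 := hs2 hk
  have hcomm : Commute (c • (1 : Matrix (Fin 2) (Fin 2) (ZMod p))) s := by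
    show _ * _ = _ * _
    rw [Matrix.smul_mul, Matrix.mul_smul, one_mul, mul_one]
  have hfrob : E ^ p = (c • (1 : Matrix (Fin 2) (Fin 2) (ZMod p))) ^ p + s ^ p := by
    have hEe : E = c • 1 + s := by rw [hs]; abel
    rw [hEe]
    exact add_pow_char_of_commute _ hcomm
  have hc1p : (c • (1 : Matrix (Fin 2) (Fin 2) (ZMod p))) ^ p = c • 1 := by
    rw [smul_pow, one_pow, ZMod.pow_card]
  have hsp : s ^ p = d ^ h • s := by
    have hps : s ^ p = (s * s) ^ h * s := by
      rw [← pow_two, ← pow_mul, ← pow_succ]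
      exact congrArg (fun t => s ^ t) hph
    rw [hps, hss, smul_pow, one_pow, Matrix.smul_mul, one_mul]
  by_cases hd0 : d = 0
  · -- ramified case : E^(2p) = 1
    refine ⟨2 * p, by positivity, ⟨p, rfl⟩, le_refl _, ?_⟩
    have hEp : E ^ p = c • 1 := by
      rw [hfrob, hc1p, hsp, hd0, zero_pow (by omega), zero_smul, add_zero]
    have hcc : c * c = 1 := sub_eq_zero.mp (hd.symm.trans hd0)
    rw [mul_comm 2 p, pow_mul, hEp, smul_pow, one_pow, pow_two, hcc, one_smul]
  · have hx2 : d ^ h * d ^ h = 1 := by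
      rw [← pow_add]
      have : h + h = p - 1 := by omega
      rw [this, ZMod.pow_card_sub_one_eq_one hd0]
    rcases mul_self_eq_one_iff.mp hx2 with hx | hx
    · -- split case : E^(p-1) = 1
      refine ⟨p - 1, by omega, by omega, by omega, ?_⟩
      have hEp : E ^ p = E := by
        rw [hfrob, hc1p, hsp, hx, one_smul, hs]; abel
      have hunit := hEinv k
      calc E ^ (p-1) = E ^ (p-1) * (E * (k • 1 - E)) := by rw [hunit.1, mul_one]
        _ = (E ^ (p-1) * E) * (k • 1 - E) := by rw [mul_assoc]
        _ = E ^ p * (k • 1 - E) := by rw [← pow_succ, Nat.sub_add_cancel (by omega : 1 ≤ p)]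
        _ = E * (k • 1 - E) := by rw [hEp]
        _ = 1 := hunit.1
    · -- nonsplit case : E^(p+1) = 1
      refine ⟨p + 1, by omega, by omega, by omega, ?_⟩
      have hEp : E ^ p = k • 1 - E := by
        rw [hfrob, hc1p, hsp, hx, neg_one_smul, hs, hk, two_mul, add_smul]; abel
      rw [pow_succ, hEp]
      exact (hEinv k).2

lemma cast_matE {m n : ℕ} (d : m ∣ n) (k : ℤ) :
    (ZMod.castHom d (ZMod m)).mapMatrix (matE (k : ZMod n)) = matE (k : ZMod m) := by
  ext i j
  fin_cases i <;> fin_cases j <;>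
    simp [matE, RingHom.mapMatrix_apply, Matrix.map_apply, -ZMod.castHom_apply,
      map_neg, map_one, map_intCast]

lemma crt_inj {n₁ n₂ : ℕ} (h1 : n₁ ≠ 0) (h2 : n₂ ≠ 0) (hco : Nat.Coprime n₁ n₂)
    (x : ZMod (n₁ * n₂))
    (e1 : ZMod.castHom (dvd_mul_right n₁ n₂) (ZMod n₁) x = 0)
    (e2 : ZMod.castHom (dvd_mul_left n₂ n₁) (ZMod n₂) x = 0) : x = 0 := by
  haveI : NeZero (n₁ * n₂) := ⟨mul_ne_zero h1 h2⟩
  obtain ⟨a, rfl⟩ := ZMod.natCast_zmod_surjective x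
  rw [map_natCast, ZMod.natCast_eq_zero_iff] at e1 e2
  rw [ZMod.natCast_eq_zero_iff]
  exact hco.mul_dvd_of_dvd_of_dvd e1 e2

lemma crt_comb {n₁ n₂ : ℕ} (h1 : n₁ ≠ 0) (h2 : n₂ ≠ 0) (hco : Nat.Coprime n₁ n₂)
    (A : Matrix (Fin 2) (Fin 2) (ZMod (n₁ * n₂))) (m : ℕ)
    (e1 : ((ZMod.castHom (dvd_mul_right n₁ n₂) (ZMod n₁)).mapMatrix A) ^ m = 1)
    (e2 : ((ZMod.castHom (dvd_mul_left n₂ n₁) (ZMod n₂)).mapMatrix A) ^ m = 1) :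
    A ^ m = 1 := by
  have hz1 : (ZMod.castHom (dvd_mul_right n₁ n₂) (ZMod n₁)).mapMatrix (A ^ m - 1) = 0 := by
    rw [map_sub, map_pow, e1, map_one, sub_self]
  have hz2 : (ZMod.castHom (dvd_mul_left n₂ n₁) (ZMod n₂)).mapMatrix (A ^ m - 1) = 0 := by
    rw [map_sub, map_pow, e2, map_one, sub_self]
  have : A ^ m - 1 = 0 := by
    ext i j
    apply crt_inj h1 h2 hco
    · exact congrFun (congrFun hz1 i) j
    · exact congrFun (congrFun hz2 i) j
  rw [← sub_add_cancel (A ^ m) 1, this, zero_add]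

lemma pow_one_of_dvd {R : Type*} [Monoid R] {A : R} {m M : ℕ} (hd : m ∣ M)
    (h : A ^ m = 1) : A ^ M = 1 := by
  obtain ⟨c, rfl⟩ := hd
  rw [pow_mul, h, one_pow]

lemma opp (p : ℕ) [hfp : Fact p.Prime] (hp2 : p ≠ 2) (e : ℕ) (he : 1 ≤ e) (k : ℤ) :
    ∃ f, 0 < f ∧ 2 ∣ f ∧ f ≤ 2 * p ^ e ∧ (matE (k : ZMod (p ^ e))) ^ f = 1 := by
  have hp := hfp.out
  induction e, he using Nat.le_induction with
  | base =>
    obtain ⟨f, h1, h2, h3, h4⟩ := field_case hp2 (k : ZMod p)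
    refine ⟨f, h1, h2, ?_, ?_⟩
    · rwa [pow_one]
    · rw [pow_one]; exact h4
  | succ e he ih =>
    obtain ⟨f, h1, h2, h3, h4⟩ := ih
    have hne : p ^ e ≠ 0 := pow_ne_zero _ hp.pos.ne'
    have hdvd : p ∣ p ^ e := dvd_pow_self p (by omega)
    refine ⟨f * p, Nat.mul_pos h1 hp.pos, Dvd.dvd.mul_right h2 p, ?_, ?_⟩
    · rw [pow_succ]
      calc f * p ≤ (2 * p ^ e) * p := Nat.mul_le_mul_right p h3
        _ = 2 * (p ^ e * p) := by ring
    · have : (matE (k : ZMod (p ^ e * p))) ^ (f * p) = 1 := by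
        apply lift_pow hne hp.pos.ne' hdvd
        rw [cast_matE (dvd_mul_right (p^e) p) k]
        exact h4
      rw [pow_succ]
      exact this

lemma two_lemma (a : ℕ) (ha : 3 ≤ a) (k : ℤ) :
    ∃ m, 0 < m ∧ 2 ∣ m ∧ m ≤ 2 ^ a ∧ (matE (k : ZMod (2 ^ a))) ^ m = 1 := by
  induction a, ha using Nat.le_induction with
  | base =>
    have h8 : (2 : ℕ) ^ 3 = 8 := by norm_num
    rw [h8]
    rcases base8 (k : ZMod 8) with h | h
    · exact ⟨6, by norm_num, by norm_num, by norm_num, h⟩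
    · exact ⟨8, by norm_num, by norm_num, by norm_num, h⟩
  | succ a ha ih =>
    obtain ⟨m, h1, h2, h3, h4⟩ := ih
    have hne : (2:ℕ) ^ a ≠ 0 := pow_ne_zero _ two_ne_zero
    have hdvd : (2:ℕ) ∣ 2 ^ a := dvd_pow_self 2 (by omega)
    refine ⟨m * 2, by positivity, Dvd.dvd.mul_right h2 2, ?_, ?_⟩
    · rw [pow_succ]; exact Nat.mul_le_mul_right 2 h3
    · have : (matE (k : ZMod (2 ^ a * 2))) ^ (m * 2) = 1 := by
        apply lift_pow hne two_ne_zero hdvd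
        rw [cast_matE (dvd_mul_right (2^a) 2) k]
        exact h4
      rw [pow_succ]
      exact this

lemma key : ∀ q : ℕ, Odd q → ∀ a : ℕ, 3 ≤ a → ∀ k : ℤ,
    ∃ m, 0 < m ∧ 2 ∣ m ∧ m ≤ 2 ^ a * q ∧ (matE (k : ZMod (2 ^ a * q))) ^ m = 1 := by
  intro q
  induction q using Nat.strong_induction_on with
  | _ q ih =>
    intro hq a ha k
    have hq0 : q ≠ 0 := by rintro rfl; simp [Nat.odd_iff] at hq
    have hq2 : ¬ 2 ∣ q := by rw [Nat.odd_iff] at hq; omega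
    by_cases hq1 : q = 1
    · subst hq1
      rw [mul_one]
      obtain ⟨m, h1, h2, h3, h4⟩ := two_lemma a ha k
      exact ⟨m, h1, h2, h3, h4⟩
    · set p := q.minFac with hpdef
      have hp : p.Prime := Nat.minFac_prime hq1
      haveI : Fact p.Prime := ⟨hp⟩
      have hpdvd : p ∣ q := Nat.minFac_dvd q
      have hp2 : p ≠ 2 := fun h => hq2 (h ▸ hpdvd)
      set e := q.factorization p with hedef
      have he : 1 ≤ e := hp.factorization_pos_of_dvd hq0 hpdvd
      set q' := q / p ^ e with hq'def
      have heq : p ^ e * q' = q := Nat.ordProj_mul_ordCompl_eq_self q p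
      have hndvd : ¬ p ∣ q' := Nat.not_dvd_ordCompl hp hq0
      have hq'0 : q' ≠ 0 := by
        intro h; rw [h, mul_zero] at heq; exact hq0 heq.symm
      have hq'dvd : q' ∣ q := Nat.ordCompl_dvd q p
      have hq'odd : Odd q' := by
        rw [Nat.odd_iff]
        rcases Nat.even_or_odd q' with hev | hod
        · exact absurd (dvd_trans hev.two_dvd hq'dvd) hq2
        · exact Nat.odd_iff.mp hod
      have hpe1 : 1 < p ^ e := Nat.one_lt_pow (by omega) hp.one_lt
      have hq'lt : q' < q := Nat.div_lt_self (Nat.pos_of_ne_zero hq0) hpe1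
      obtain ⟨m₁, hm1, hm2, hm3, hm4⟩ := ih q' hq'lt hq'odd a ha k
      obtain ⟨f, hf1, hf2, hf3, hf4⟩ := opp p hp2 e he k
      have h1ne : 2 ^ a * q' ≠ 0 := mul_ne_zero (pow_ne_zero _ two_ne_zero) hq'0
      have h2ne : p ^ e ≠ 0 := pow_ne_zero _ hp.pos.ne'
      have hndvd2 : ¬ p ∣ 2 ^ a * q' := by
        intro hd
        rcases (Nat.Prime.dvd_mul hp).mp hd with hd | hd
        · exact hp2 ((Nat.prime_dvd_prime_iff_eq hp Nat.prime_two).mp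
            (hp.dvd_of_dvd_pow hd))
        · exact hndvd hd
      have hco : Nat.Coprime (2 ^ a * q') (p ^ e) :=
        Nat.Coprime.pow_right e (Nat.coprime_comm.mp
          ((Nat.Prime.coprime_iff_not_dvd hp).mpr hndvd2))
      set M := Nat.lcm m₁ f with hMdef
      have hMpos : 0 < M := Nat.pos_of_ne_zero (Nat.lcm_ne_zero (by omega) (by omega))
      have hM2 : 2 ∣ M := dvd_trans hm2 (Nat.dvd_lcm_left m₁ f)
      have hgcd2 : 2 ≤ Nat.gcd m₁ f :=
        Nat.le_of_dvd (Nat.gcd_pos_of_pos_left f hm1) (Nat.dvd_gcd hm2 hf2)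
      have hMle : M ≤ 2 ^ a * q' * p ^ e := by
        have h1 : M * 2 ≤ M * Nat.gcd m₁ f := Nat.mul_le_mul_left M hgcd2
        have h2 : M * Nat.gcd m₁ f = m₁ * f := by
          rw [mul_comm]; exact Nat.gcd_mul_lcm m₁ f
        have h3 : m₁ * f ≤ (2 ^ a * q') * (2 * p ^ e) := Nat.mul_le_mul hm3 hf3
        have h4 : (2 ^ a * q') * (2 * p ^ e) = (2 ^ a * q' * p ^ e) * 2 := by ring
        omega
      have hNeq : 2 ^ a * q = (2 ^ a * q') * p ^ e := by rw [← heq]; ring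
      rw [hNeq]
      refine ⟨M, hMpos, hM2, hMle, ?_⟩
      apply crt_comb h1ne h2ne hco
      · rw [cast_matE (dvd_mul_right (2 ^ a * q') (p ^ e)) k]
        exact pow_one_of_dvd (Nat.dvd_lcm_left m₁ f) hm4
      · rw [cast_matE (dvd_mul_left (p ^ e) (2 ^ a * q')) k]
        exact pow_one_of_dvd (Nat.dvd_lcm_right m₁ f) hf4

end Aux

theorem stmt16 (N : ℕ) (h8 : 8 ∣ N) (hN : 8 ≤ N)
    (k : ℤ) (l : ℕ) (hl : minMonSize (k : ZMod N) l) :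
    l ≤ N := by
  have hN0 : N ≠ 0 := by omega
  set a := N.factorization 2 with hadef
  have ha : 3 ≤ a := by
    have h83 : (2:ℕ) ^ 3 ∣ N := by norm_num; exact h8
    exact (Nat.Prime.pow_dvd_iff_le_factorization Nat.prime_two hN0).mp h83
  set q := N / 2 ^ a with hqdef
  have heq : 2 ^ a * q = N := Nat.ordProj_mul_ordCompl_eq_self N 2
  have hq2 : ¬ 2 ∣ q := Nat.not_dvd_ordCompl Nat.prime_two hN0
  have hqodd : Odd q := Nat.odd_iff.mpr (by omega)
  obtain ⟨m, hm1, _, hm3, hm4⟩ := key q hqodd a ha k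
  rw [heq] at hm3 hm4
  exact le_trans (hl.2.2 m hm1 (Or.inl hm4)) hm3
end
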